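/- arXiv:math/0405207 — 4 statements merged into one kernel-verified Lean document; each statement's English description precedes it below -/
import Mathlib

section
/- With the impulsive Volterra setup and the operator S_c as defined there, let h* := min_{1≤i≤N+1}(τ_i − τ_{i−1}) and for μ > 0 define ‖ξ‖_μ := sup_{0≤t≤T} e^{−μt}|ξ(t)| and ‖η‖_μ := max_{1≤i≤N} e^{−μτ_i}|η_i|. Then for every μ > 0 and all admissible pairs (ξ₁,η₁), (ξ₂,η₂): ‖S_c(ξ₁,η₁) − S_c(ξ₂,η₂)‖_μ ≤ C_f·((1 − e^{−μT})/μ)·‖ξ₁ − ξ₂‖_μ + C_G·(1 + e^{−μh*}·(1 − e^{−(N−1)μh*})/(1 − e^{−μh*}))·‖η₁ − η₂‖_μ. -/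
open Set Filter

private lemma geom_reindex (r : ℝ) (k : ℕ) :
    ∑ j ∈ Finset.Icc 1 k, r ^ (k - j) = ∑ d ∈ Finset.range k, r ^ d := by
  refine Finset.sum_nbij' (fun j => k - j) (fun d => k - d) ?_ ?_ ?_ ?_ ?_
  · intro a ha; simp only [Finset.mem_Icc] at ha; simp only [Finset.mem_range]; omega
  · intro a ha; simp only [Finset.mem_range] at ha; simp only [Finset.mem_Icc]; omega
  · intro a ha; simp only [Finset.mem_Icc] at ha; omega
  · intro a ha; simp only [Finset.mem_range] at ha; omega
  · intro a ha; rfl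

private lemma geom_const (r : ℝ) (hr1 : r < 1) (N : ℕ) (hN : 1 ≤ N) :
    ∑ d ∈ Finset.range N, r ^ d = 1 + r * (1 - r ^ (N - 1)) / (1 - r) := by
  have h1 : (1:ℝ) - r ≠ 0 := by intro hc; nlinarith
  have hrn : r ^ N = r * r ^ (N - 1) := by
    conv_lhs => rw [show N = (N - 1) + 1 by omega]
    rw [pow_succ]; ring
  rw [geom_sum_eq (by intro hc; rw [hc] at hr1; exact lt_irrefl 1 hr1) N, hrn]
  generalize r ^ (N - 1) = q
  have h2 : r - 1 ≠ 0 := by intro hc; apply h1; linarith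
  field_simp
  ring

set_option maxHeartbeats 1600000

/-- **Lemma 3.2, continuous component.** With `h* = min (τ_i − τ_{i−1})` and the weighted norms
`‖ξ‖_μ = sup_{0≤t≤T} e^{−μt}|ξ(t)|`, `‖η‖_μ = max_{1≤i≤N} e^{−μτ_i}|η_i|`, the continuous
component `S_c` of the fixed-point operator satisfies, for every `μ > 0`,
`‖S_c(ξ₁,η₁) − S_c(ξ₂,η₂)‖_μ ≤ C_f (1−e^{−μT})/μ ‖ξ₁−ξ₂‖_μ
  + C_G (1 + e^{−μh*}(1−e^{−(N−1)μh*})/(1−e^{−μh*})) ‖η₁−η₂‖_μ`. -/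
theorem Sc_weighted_norm_estimate
    (n m N : ℕ) (hN : 1 ≤ N) (T : ℝ) (hT : 0 < T)
    (τ : ℕ → ℝ) (hτ0 : τ 0 = 0) (hτT : τ (N + 1) = T)
    (hτmono : ∀ i j : ℕ, i < j → j ≤ N + 1 → τ i < τ j)
    (U : Set (Fin m → ℝ)) (a : ℕ → (Fin m → ℝ)) (haU : ∀ i, 1 ≤ i → i ≤ N + 1 → a i ∈ U)
    (u : ℝ → (Fin m → ℝ))
    (hu : ∀ i, 1 ≤ i → i ≤ N + 1 → ∀ t ∈ Ico (τ (i - 1)) (τ i), u t = a i)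
    (h : ℝ → EuclideanSpace ℝ (Fin n)) (hh : ContinuousOn h (Icc 0 T))
    (f : ℝ → ℝ → EuclideanSpace ℝ (Fin n) → (Fin m → ℝ) → EuclideanSpace ℝ (Fin n))
    (G : ℝ → ℝ → EuclideanSpace ℝ (Fin n) → (Fin m → ℝ) → (Fin m → ℝ) →
      EuclideanSpace ℝ (Fin n))
    (hf : ContinuousOn
      (fun p : (ℝ × ℝ) × EuclideanSpace ℝ (Fin n) × (Fin m → ℝ) => f p.1.1 p.1.2 p.2.1 p.2.2)
      (({st : ℝ × ℝ | 0 ≤ st.2 ∧ st.2 ≤ st.1 ∧ st.1 ≤ T}) ×ˢ ((univ : Set _) ×ˢ U)))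
    (hG : ContinuousOn
      (fun p : (ℝ × ℝ) × EuclideanSpace ℝ (Fin n) × (Fin m → ℝ) × (Fin m → ℝ) =>
        G p.1.1 p.1.2 p.2.1 p.2.2.1 p.2.2.2)
      (({st : ℝ × ℝ | 0 ≤ st.2 ∧ st.2 ≤ st.1 ∧ st.1 ≤ T}) ×ˢ ((univ : Set _) ×ˢ (U ×ˢ U))))
    (Cf CG : ℝ)
    (hfLip : ∀ s t : ℝ, 0 ≤ t → t ≤ s → s ≤ T → ∀ α ∈ U,
      ∀ x₁ x₂ : EuclideanSpace ℝ (Fin n), ‖f s t x₁ α - f s t x₂ α‖ ≤ Cf * ‖x₁ - x₂‖)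
    (hGLip : ∀ s t : ℝ, 0 ≤ t → t ≤ s → s ≤ T → ∀ α ∈ U, ∀ β ∈ U,
      ∀ x₁ x₂ : EuclideanSpace ℝ (Fin n), ‖G s t x₁ α β - G s t x₂ α β‖ ≤ CG * ‖x₁ - x₂‖)
    (μ : ℝ) (hμ : 0 < μ)
    -- the two admissible pairs `(ξ₁,η₁)`, `(ξ₂,η₂)`:
    (ξ₁ ξ₂ : ℝ → EuclideanSpace ℝ (Fin n)) (η₁ η₂ : ℕ → EuclideanSpace ℝ (Fin n))
    (hbdd₁ : ∃ M : ℝ, ∀ t ∈ Icc 0 T, ‖ξ₁ t‖ ≤ M)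
    (hbdd₂ : ∃ M : ℝ, ∀ t ∈ Icc 0 T, ‖ξ₂ t‖ ≤ M)
    (hcont₁ : ∀ i, 1 ≤ i → i ≤ N + 1 → ContinuousOn ξ₁ (Ioo (τ (i - 1)) (τ i)))
    (hcont₂ : ∀ i, 1 ≤ i → i ≤ N + 1 → ContinuousOn ξ₂ (Ioo (τ (i - 1)) (τ i)))
    (hlim₁ : (∀ i, i ≤ N → ∃ Lp, Tendsto ξ₁ (nhdsWithin (τ i) (Ioi (τ i))) (nhds Lp)) ∧
      (∀ i, 1 ≤ i → i ≤ N + 1 → ∃ Lm, Tendsto ξ₁ (nhdsWithin (τ i) (Iio (τ i))) (nhds Lm)))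
    (hlim₂ : (∀ i, i ≤ N → ∃ Lp, Tendsto ξ₂ (nhdsWithin (τ i) (Ioi (τ i))) (nhds Lp)) ∧
      (∀ i, 1 ≤ i → i ≤ N + 1 → ∃ Lm, Tendsto ξ₂ (nhdsWithin (τ i) (Iio (τ i))) (nhds Lm))) :
    -- the continuous-component estimate with the explicit constants `a₁₁(μ)`, `a₁₂(μ)` of (3.5)
    (⨆ s : Icc (0:ℝ) T, Real.exp (-μ * s) *
        ‖(h s + (∫ t in (0:ℝ)..(s:ℝ), f s t (ξ₁ t) (u t)) +
            ∑ j ∈ (Finset.Icc 1 N).filter (fun j => τ j < (s:ℝ)),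
              G s (τ j) (η₁ j) (a j) (a (j + 1))) -
          (h s + (∫ t in (0:ℝ)..(s:ℝ), f s t (ξ₂ t) (u t)) +
            ∑ j ∈ (Finset.Icc 1 N).filter (fun j => τ j < (s:ℝ)),
              G s (τ j) (η₂ j) (a j) (a (j + 1)))‖)
    ≤ Cf * ((1 - Real.exp (-μ * T)) / μ) *
        (⨆ t : Icc (0:ℝ) T, Real.exp (-μ * t) * ‖ξ₁ t - ξ₂ t‖) +
      CG * (1 + Real.exp (-μ * ((Finset.Icc 1 (N + 1)).inf'
            (Finset.nonempty_Icc.mpr (by omega)) (fun i => τ i - τ (i - 1)))) *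
          (1 - Real.exp (-((N : ℝ) - 1) * μ * ((Finset.Icc 1 (N + 1)).inf'
            (Finset.nonempty_Icc.mpr (by omega)) (fun i => τ i - τ (i - 1))))) /
          (1 - Real.exp (-μ * ((Finset.Icc 1 (N + 1)).inf'
            (Finset.nonempty_Icc.mpr (by omega)) (fun i => τ i - τ (i - 1)))))) *
        ((Finset.Icc 1 N).sup' (Finset.nonempty_Icc.mpr hN)
          (fun i => Real.exp (-μ * τ i) * ‖η₁ i - η₂ i‖)) := by
  classical
  rcases Nat.eq_zero_or_pos n with hn0 | hn0
  · -- trivial case n = 0: all norms vanish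
    subst hn0
    have hz : ∀ x : EuclideanSpace ℝ (Fin 0), ‖x‖ = 0 := fun x => by
      rw [show x = 0 from by ext i; exact i.elim0, norm_zero]
    haveI : Nonempty (Icc (0:ℝ) T) := (nonempty_Icc.mpr hT.le).to_subtype
    simp only [hz, mul_zero]
    rw [Finset.sup'_const]
    simp
  have hne : (Finset.Icc 1 (N + 1)).Nonempty := Finset.nonempty_Icc.mpr (by omega)
  have hneN : (Finset.Icc 1 N).Nonempty := Finset.nonempty_Icc.mpr hN
  haveI : Nonempty (Icc (0:ℝ) T) := (nonempty_Icc.mpr hT.le).to_subtype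
  obtain ⟨M₁, hM₁⟩ := hbdd₁
  obtain ⟨M₂, hM₂⟩ := hbdd₂
  set hstar : ℝ := (Finset.Icc 1 (N + 1)).inf' hne (fun i => τ i - τ (i - 1)) with hstar_def
  set r : ℝ := Real.exp (-μ * hstar) with hr_def
  set K : ℝ := ⨆ t : Icc (0:ℝ) T, Real.exp (-μ * t) * ‖ξ₁ t - ξ₂ t‖ with hK_def
  set H : ℝ := (Finset.Icc 1 N).sup' hneN (fun i => Real.exp (-μ * τ i) * ‖η₁ i - η₂ i‖)
    with hH_def
  -- basic facts about τ
  have hτnn : ∀ i, i ≤ N + 1 → 0 ≤ τ i := by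
    intro i hi
    rcases Nat.eq_zero_or_pos i with h0 | h0
    · subst h0; rw [hτ0]
    · rw [← hτ0]; exact (hτmono 0 i h0 hi).le
  have hτleT : ∀ i, i ≤ N + 1 → τ i ≤ T := by
    intro i hi
    rcases eq_or_lt_of_le hi with h0 | h0
    · rw [h0, hτT]
    · rw [← hτT]; exact (hτmono i (N+1) h0 le_rfl).le
  have hstar_le : ∀ i, 1 ≤ i → i ≤ N + 1 → hstar ≤ τ i - τ (i - 1) :=
    fun i h1 h2 => Finset.inf'_le _ (Finset.mem_Icc.mpr ⟨h1, h2⟩)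
  have hstar_pos : 0 < hstar := by
    rw [hstar_def]
    rw [Finset.lt_inf'_iff]
    intro i hi
    rw [Finset.mem_Icc] at hi
    exact sub_pos.mpr (hτmono (i-1) i (by omega) hi.2)
  have hr0 : 0 < r := Real.exp_pos _
  have hr1 : r < 1 := by
    rw [hr_def, Real.exp_lt_one_iff]
    nlinarith
  have tele : ∀ j d : ℕ, j + d ≤ N + 1 → (d : ℝ) * hstar ≤ τ (j + d) - τ j := by
    intro j d
    induction d with
    | zero => intro _; simp
    | succ d ih =>
      intro hle
      have h1 := ih (by omega)
      have h2 : hstar ≤ τ (j + d + 1) - τ (j + d) := by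
        have := hstar_le (j + d + 1) (by omega) (by omega)
        simpa using this
      push_cast
      have hee : j + (d + 1) = j + d + 1 := rfl
      rw [hee]
      linarith
  -- positivity of Lipschitz constants
  have hev : ‖(EuclideanSpace.single (⟨0, hn0⟩ : Fin n) (1:ℝ)) - 0‖ = 1 := by
    rw [sub_zero, EuclideanSpace.norm_single, norm_one]
  have haU1 : a 1 ∈ U := haU 1 le_rfl (by omega)
  have hCf : 0 ≤ Cf := by
    have h1 := hfLip T 0 le_rfl hT.le le_rfl (a 1) haU1
      (EuclideanSpace.single (⟨0, hn0⟩ : Fin n) (1:ℝ)) 0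
    rw [hev, mul_one] at h1
    exact le_trans (norm_nonneg _) h1
  have hCG : 0 ≤ CG := by
    have h1 := hGLip T 0 le_rfl hT.le le_rfl (a 1) haU1 (a 1) haU1
      (EuclideanSpace.single (⟨0, hn0⟩ : Fin n) (1:ℝ)) 0
    rw [hev, mul_one] at h1
    exact le_trans (norm_nonneg _) h1
  -- facts about K
  have hKbdd : BddAbove (range fun t : Icc (0:ℝ) T => Real.exp (-μ * t) * ‖ξ₁ t - ξ₂ t‖) := by
    refine ⟨M₁ + M₂, forall_mem_range.mpr fun t => ?_⟩
    have h1 : Real.exp (-μ * t) ≤ 1 := by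
      rw [Real.exp_le_one_iff]
      nlinarith [t.2.1]
    have h2 : ‖ξ₁ t - ξ₂ t‖ ≤ M₁ + M₂ :=
      (norm_sub_le _ _).trans (add_le_add (hM₁ _ t.2) (hM₂ _ t.2))
    calc Real.exp (-μ * t) * ‖ξ₁ t - ξ₂ t‖ ≤ 1 * (M₁ + M₂) :=
          mul_le_mul h1 h2 (norm_nonneg _) zero_le_one
      _ = M₁ + M₂ := one_mul _
  have hKle : ∀ t : Icc (0:ℝ) T, Real.exp (-μ * t) * ‖ξ₁ t - ξ₂ t‖ ≤ K :=
    fun t => le_ciSup hKbdd t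
  have hK0 : 0 ≤ K := le_trans (by positivity) (hKle ⟨0, le_rfl, hT.le⟩)
  have hKle' : ∀ t : ℝ, 0 ≤ t → t ≤ T → ‖ξ₁ t - ξ₂ t‖ ≤ Real.exp (μ * t) * K := by
    intro t h0 h1
    have h2 := hKle ⟨t, h0, h1⟩
    have h3 : Real.exp (μ * t) * Real.exp (-μ * t) = 1 := by
      rw [← Real.exp_add]; norm_num
    calc ‖ξ₁ t - ξ₂ t‖ = Real.exp (μ * t) * (Real.exp (-μ * t) * ‖ξ₁ t - ξ₂ t‖) := by
          rw [← mul_assoc, h3, one_mul]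
      _ ≤ Real.exp (μ * t) * K :=
          mul_le_mul_of_nonneg_left h2 (Real.exp_pos _).le
  -- facts about H
  have hHle : ∀ j, 1 ≤ j → j ≤ N → ‖η₁ j - η₂ j‖ ≤ Real.exp (μ * τ j) * H := by
    intro j h1 h2
    have h0 := Finset.le_sup' (fun i => Real.exp (-μ * τ i) * ‖η₁ i - η₂ i‖)
      (Finset.mem_Icc.mpr ⟨h1, h2⟩)
    have h3 : Real.exp (μ * τ j) * Real.exp (-μ * τ j) = 1 := by
      rw [← Real.exp_add]; norm_num
    calc ‖η₁ j - η₂ j‖ = Real.exp (μ * τ j) * (Real.exp (-μ * τ j) * ‖η₁ j - η₂ j‖) := by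
          rw [← mul_assoc, h3, one_mul]
      _ ≤ Real.exp (μ * τ j) * H := mul_le_mul_of_nonneg_left h0 (Real.exp_pos _).le
  have hH0 : 0 ≤ H := le_trans (by positivity)
    (Finset.le_sup' (fun i => Real.exp (-μ * τ i) * ‖η₁ i - η₂ i‖)
      (Finset.mem_Icc.mpr ⟨le_rfl, hN⟩))
  -- the exceptional null set of partition points
  set E : Set ℝ := τ '' {j | j ≤ N + 1} with hE_def
  have hEnull : MeasureTheory.volume E = 0 :=
    ((Set.finite_Iic (N + 1)).image τ).measure_zero _
  have hfind : ∀ t : ℝ, 0 < t → t ≤ T → t ∉ E →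
      ∃ i, 1 ≤ i ∧ i ≤ N + 1 ∧ τ (i - 1) < t ∧ t < τ i ∧ u t = a i := by
    intro t ht0 htT htE
    have hp : t < τ (N + 1) := by
      rcases lt_or_eq_of_le htT with hlt | heq
      · rwa [hτT]
      · exact absurd ⟨N + 1, by simp, hτT.trans heq.symm⟩ htE
    have hex : ∃ i, t < τ i := ⟨N + 1, hp⟩
    set i := Nat.find hex with hi_def
    have hspec : t < τ i := Nat.find_spec hex
    have hile : i ≤ N + 1 := Nat.find_le hp
    have hi1 : 1 ≤ i := by
      by_contra hc
      have : i = 0 := by omega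
      rw [this, hτ0] at hspec
      linarith
    have hlow : τ (i - 1) ≤ t := by
      have := Nat.find_min hex (show i - 1 < i by omega)
      linarith [not_lt.mp this]
    have hlow' : τ (i - 1) < t := by
      rcases lt_or_eq_of_le hlow with hlt | heq
      · exact hlt
      · exact absurd ⟨i - 1, by simp only [Set.mem_setOf_eq]; omega, heq⟩ htE
    exact ⟨i, hi1, hile, hlow', hspec, hu i hi1 hile t ⟨hlow, hspec⟩⟩
  -- integrability of the Volterra integrand
  have integ : ∀ (ξ : ℝ → EuclideanSpace ℝ (Fin n)) (M : ℝ),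
      (∀ t ∈ Icc (0:ℝ) T, ‖ξ t‖ ≤ M) →
      (∀ i, 1 ≤ i → i ≤ N + 1 → ContinuousOn ξ (Ioo (τ (i - 1)) (τ i))) →
      ∀ s : ℝ, 0 ≤ s → s ≤ T →
      IntervalIntegrable (fun t => f s t (ξ t) (u t)) MeasureTheory.volume 0 s := by
    intro ξ M hM hcont s hs0 hsT
    rw [intervalIntegrable_iff_integrableOn_Ioc_of_le hs0]
    set S : ℕ → Set ℝ := fun i => if i ≤ N then Ioo (τ i) (τ (i + 1)) ∩ Ioc 0 s else ∅
      with hS_def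
    have hcovsub : Ioc 0 s \ E ⊆ ⋃ i, S i := by
      rintro t ⟨ht, htE⟩
      obtain ⟨i, hi1, hi2, hlow, hhigh, _⟩ := hfind t ht.1 (le_trans ht.2 hsT) htE
      refine mem_iUnion.mpr ⟨i - 1, ?_⟩
      rw [hS_def]; dsimp only
      rw [if_pos (by omega : i - 1 ≤ N)]
      have hee : i - 1 + 1 = i := by omega
      rw [hee]
      exact ⟨⟨hlow, hhigh⟩, ht⟩
    have hsub : (⋃ i, S i) ⊆ Ioc 0 s := by
      intro t ht
      obtain ⟨i, hti⟩ := mem_iUnion.mp ht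
      by_cases hi : i ≤ N
      · rw [hS_def] at hti; dsimp only at hti; rw [if_pos hi] at hti; exact hti.2
      · rw [hS_def] at hti; dsimp only at hti; rw [if_neg hi] at hti
        exact absurd hti (notMem_empty t)
    have hres : MeasureTheory.volume.restrict (Ioc 0 s)
        = MeasureTheory.volume.restrict (⋃ i, S i) := by
      apply MeasureTheory.Measure.restrict_congr_set
      rw [MeasureTheory.ae_eq_set]
      constructor
      · refine MeasureTheory.measure_mono_null (fun t ht => ?_) hEnull
        by_contra htE
        exact ht.2 (hcovsub ⟨ht.1, htE⟩)
      · rw [Set.diff_eq_empty.mpr hsub]; exact MeasureTheory.measure_empty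
    obtain ⟨C, hC⟩ : ∃ C, ∀ t ∈ Ioc 0 s \ E, ‖f s t (ξ t) (u t)‖ ≤ C := by
      set Kc : Set ((ℝ × ℝ) × EuclideanSpace ℝ (Fin n) × (Fin m → ℝ)) :=
        ({s} ×ˢ Icc 0 s) ×ˢ (Metric.closedBall (0 : EuclideanSpace ℝ (Fin n)) M ×ˢ
          (↑((Finset.Icc 1 (N + 1)).image a) : Set (Fin m → ℝ))) with hKc_def
      have hKcomp : IsCompact Kc := (isCompact_singleton.prod isCompact_Icc).prod
        ((isCompact_closedBall _ _).prod (Finset.finite_toSet _).isCompact)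
      have hKsub : Kc ⊆ ({st : ℝ × ℝ | 0 ≤ st.2 ∧ st.2 ≤ st.1 ∧ st.1 ≤ T} ×ˢ
          ((univ : Set (EuclideanSpace ℝ (Fin n))) ×ˢ U)) := by
        rintro ⟨⟨s', t⟩, x, α⟩ ⟨⟨hs', ht⟩, hx, hα⟩
        rw [mem_singleton_iff] at hs'
        subst hs'
        refine ⟨⟨ht.1, ht.2, hsT⟩, mem_univ _, ?_⟩
        obtain ⟨i, hi, rfl⟩ := Finset.mem_image.mp (Finset.mem_coe.mp hα)
        rw [Finset.mem_Icc] at hi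
        exact haU i hi.1 hi.2
      obtain ⟨C, hC⟩ := hKcomp.exists_bound_of_continuousOn (hf.mono hKsub)
      refine ⟨C, fun t ht => ?_⟩
      obtain ⟨ht1, htE⟩ := ht
      obtain ⟨i, hi1, hi2, _, _, hut⟩ := hfind t ht1.1 (le_trans ht1.2 hsT) htE
      have hmem : (((s, t), (ξ t, a i)) : (ℝ × ℝ) × EuclideanSpace ℝ (Fin n) × (Fin m → ℝ))
          ∈ Kc := by
        refine ⟨⟨rfl, ht1.1.le, ht1.2⟩, ?_, ?_⟩
        · exact mem_closedBall_zero_iff.mpr (hM t ⟨ht1.1.le, le_trans ht1.2 hsT⟩)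
        · exact Finset.mem_coe.mpr
            (Finset.mem_image_of_mem a (Finset.mem_Icc.mpr ⟨hi1, hi2⟩))
      have := hC _ hmem
      rw [hut]
      exact this
    have hmeas : MeasureTheory.AEStronglyMeasurable (fun t => f s t (ξ t) (u t))
        (MeasureTheory.volume.restrict (Ioc 0 s)) := by
      rw [hres, aestronglyMeasurable_iUnion_iff]
      intro i
      by_cases hi : i ≤ N
      · have hSi : S i = Ioo (τ i) (τ (i + 1)) ∩ Ioc 0 s := by
          rw [hS_def]; dsimp only; rw [if_pos hi]
        have hSmeas : MeasurableSet (S i) := by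
          rw [hSi]; exact measurableSet_Ioo.inter measurableSet_Ioc
        have hmemu : ∀ t ∈ S i, u t = a (i + 1) := by
          intro t ht
          rw [hSi] at ht
          apply hu (i + 1) (by omega) (by omega) t
          simp only [Nat.add_sub_cancel]
          exact ⟨ht.1.1.le, ht.1.2⟩
        have hξc : ContinuousOn ξ (S i) := by
          rw [hSi]
          have := hcont (i + 1) (by omega) (by omega)
          simp only [Nat.add_sub_cancel] at this
          exact this.mono inter_subset_left
        have hc2 : ContinuousOn (fun t => f s t (ξ t) (a (i + 1))) (S i) := by
          have hmapc : ContinuousOn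
              (fun t : ℝ => (((s, t), (ξ t, a (i + 1))) :
                (ℝ × ℝ) × EuclideanSpace ℝ (Fin n) × (Fin m → ℝ))) (S i) :=
            ((continuous_const.prodMk continuous_id).continuousOn).prodMk
              (hξc.prodMk continuousOn_const)
          have hmaps : MapsTo
              (fun t : ℝ => (((s, t), (ξ t, a (i + 1))) :
                (ℝ × ℝ) × EuclideanSpace ℝ (Fin n) × (Fin m → ℝ)))
              (S i)
              (({st : ℝ × ℝ | 0 ≤ st.2 ∧ st.2 ≤ st.1 ∧ st.1 ≤ T}) ×ˢ
                ((univ : Set (EuclideanSpace ℝ (Fin n))) ×ˢ U)) := by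
            intro t ht
            rw [hSi] at ht
            exact ⟨⟨ht.2.1.le, ht.2.2, hsT⟩, mem_univ _, haU (i + 1) (by omega) (by omega)⟩
          have := hf.comp hmapc hmaps
          exact this
        have hcontF : ContinuousOn (fun t => f s t (ξ t) (u t)) (S i) :=
          hc2.congr (fun t ht => by rw [hmemu t ht])
        exact hcontF.aestronglyMeasurable hSmeas
      · have hSi : S i = ∅ := by rw [hS_def]; dsimp only; rw [if_neg hi]
        rw [hSi, MeasureTheory.Measure.restrict_empty]
        exact MeasureTheory.aestronglyMeasurable_zero_measure _
    refine MeasureTheory.Integrable.mono' (g := fun _ => C)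
      (MeasureTheory.integrableOn_const measure_Ioc_lt_top.ne)
      hmeas ?_
    have h1 : ∀ᵐ t ∂ MeasureTheory.volume.restrict (Ioc 0 s), t ∈ Ioc 0 s :=
      MeasureTheory.ae_restrict_mem measurableSet_Ioc
    have h2 : ∀ᵐ t ∂ MeasureTheory.volume.restrict (Ioc 0 s), t ∉ E :=
      (MeasureTheory.measure_eq_zero_iff_ae_notMem.mp hEnull).filter_mono
        (MeasureTheory.ae_mono MeasureTheory.Measure.restrict_le_self)
    filter_upwards [h1, h2] with t ht htE
    exact hC t ⟨ht, htE⟩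
  -- pointwise estimate
  have hpoint : ∀ s : ℝ, 0 ≤ s → s ≤ T → Real.exp (-μ * s) *
      ‖(h s + (∫ t in (0:ℝ)..s, f s t (ξ₁ t) (u t)) +
          ∑ j ∈ (Finset.Icc 1 N).filter (fun j => τ j < s),
            G s (τ j) (η₁ j) (a j) (a (j + 1))) -
        (h s + (∫ t in (0:ℝ)..s, f s t (ξ₂ t) (u t)) +
          ∑ j ∈ (Finset.Icc 1 N).filter (fun j => τ j < s),
            G s (τ j) (η₂ j) (a j) (a (j + 1)))‖
      ≤ Cf * ((1 - Real.exp (-μ * T)) / μ) * K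
        + CG * (∑ d ∈ Finset.range N, r ^ d) * H := by
    intro s hs0 hsT
    have hint₁ := integ ξ₁ M₁ hM₁ hcont₁ s hs0 hsT
    have hint₂ := integ ξ₂ M₂ hM₂ hcont₂ s hs0 hsT
    set I₁ := ∫ t in (0:ℝ)..s, f s t (ξ₁ t) (u t) with hI1
    set I₂ := ∫ t in (0:ℝ)..s, f s t (ξ₂ t) (u t) with hI2
    set J := (Finset.Icc 1 N).filter (fun j => τ j < s) with hJ
    set S₁ := ∑ j ∈ J, G s (τ j) (η₁ j) (a j) (a (j + 1)) with hS1
    set S₂ := ∑ j ∈ J, G s (τ j) (η₂ j) (a j) (a (j + 1)) with hS2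
    -- the integral part
    have hIbound : ‖I₁ - I₂‖ ≤ Cf * K * ((Real.exp (μ * s) - 1) / μ) := by
      rw [hI1, hI2, ← intervalIntegral.integral_sub hint₁ hint₂]
      have hgint : IntervalIntegrable (fun t => Cf * K * Real.exp (μ * t))
          MeasureTheory.volume 0 s := by
        apply Continuous.intervalIntegrable
        fun_prop
      have haebound : ∀ᵐ t ∂ MeasureTheory.volume.restrict (Set.uIoc (0:ℝ) s),
          ‖f s t (ξ₁ t) (u t) - f s t (ξ₂ t) (u t)‖ ≤ Cf * K * Real.exp (μ * t) := by
        have h1 : ∀ᵐ t ∂ MeasureTheory.volume.restrict (Set.uIoc (0:ℝ) s), t ∈ Set.uIoc (0:ℝ) s :=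
          MeasureTheory.ae_restrict_mem measurableSet_uIoc
        have h2 : ∀ᵐ t ∂ MeasureTheory.volume.restrict (Set.uIoc (0:ℝ) s), t ∉ E :=
          (MeasureTheory.measure_eq_zero_iff_ae_notMem.mp hEnull).filter_mono
            (MeasureTheory.ae_mono MeasureTheory.Measure.restrict_le_self)
        filter_upwards [h1, h2] with t ht htE
        rw [uIoc_of_le hs0] at ht
        obtain ⟨i, hi1, hi2, _, _, hut⟩ := hfind t ht.1 (le_trans ht.2 hsT) htE
        rw [hut]
        have hlip := hfLip s t ht.1.le ht.2 hsT (a i) (haU i hi1 hi2) (ξ₁ t) (ξ₂ t)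
        have hk := hKle' t ht.1.le (le_trans ht.2 hsT)
        calc ‖f s t (ξ₁ t) (a i) - f s t (ξ₂ t) (a i)‖ ≤ Cf * ‖ξ₁ t - ξ₂ t‖ := hlip
          _ ≤ Cf * (Real.exp (μ * t) * K) := mul_le_mul_of_nonneg_left hk hCf
          _ = Cf * K * Real.exp (μ * t) := by ring
      have hle := intervalIntegral.norm_integral_le_abs_of_norm_le haebound hgint
      have hexp : ∫ t in (0:ℝ)..s, Real.exp (μ * t) = (Real.exp (μ * s) - 1) / μ := by
        rw [intervalIntegral.integral_comp_mul_left Real.exp hμ.ne']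
        rw [integral_exp, mul_zero, Real.exp_zero, smul_eq_mul]
        field_simp
      have hval : ∫ t in (0:ℝ)..s, Cf * K * Real.exp (μ * t)
          = Cf * K * ((Real.exp (μ * s) - 1) / μ) := by
        rw [intervalIntegral.integral_const_mul, hexp]
      rw [hval] at hle
      refine hle.trans (le_of_eq (abs_of_nonneg ?_))
      have hnn : (0:ℝ) ≤ (Real.exp (μ * s) - 1) / μ := by
        apply div_nonneg _ hμ.le
        nlinarith [Real.one_le_exp (show (0:ℝ) ≤ μ * s by positivity)]
      exact mul_nonneg (mul_nonneg hCf hK0) hnn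
    -- the sum part
    have hSbound : Real.exp (-μ * s) * ‖S₁ - S₂‖
        ≤ CG * (∑ d ∈ Finset.range N, r ^ d) * H := by
      have hsum0 : 0 ≤ ∑ d ∈ Finset.range N, r ^ d :=
        Finset.sum_nonneg fun d _ => pow_nonneg hr0.le d
      rcases J.eq_empty_or_nonempty with hJe | hJne
      · rw [hS1, hS2, hJe]
        simp only [Finset.sum_empty, sub_zero, norm_zero, mul_zero]
        exact mul_nonneg (mul_nonneg hCG hsum0) hH0
      · obtain ⟨jm, hjm⟩ : ∃ jm, jm = J.max' hJne := ⟨_, rfl⟩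
        have hjmJ : jm ∈ J := hjm ▸ J.max'_mem hJne
        simp only [hJ, Finset.mem_filter, Finset.mem_Icc] at hjmJ
        obtain ⟨⟨hjm1, hjmN⟩, hjms⟩ := hjmJ
        have hterm : ∀ j ∈ J, ‖G s (τ j) (η₁ j) (a j) (a (j + 1))
            - G s (τ j) (η₂ j) (a j) (a (j + 1))‖ ≤ CG * (Real.exp (μ * τ j) * H) := by
          intro j hj
          simp only [hJ, Finset.mem_filter, Finset.mem_Icc] at hj
          obtain ⟨⟨hj1, hjN⟩, hjs⟩ := hj
          have h0 : 0 ≤ τ j := hτnn j (by omega)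
          have hlip := hGLip s (τ j) h0 hjs.le hsT (a j) (haU j hj1 (by omega))
            (a (j + 1)) (haU (j + 1) (by omega) (by omega)) (η₁ j) (η₂ j)
          exact hlip.trans (mul_le_mul_of_nonneg_left (hHle j hj1 hjN) hCG)
        have hnorm : ‖S₁ - S₂‖ ≤ ∑ j ∈ J, CG * (Real.exp (μ * τ j) * H) := by
          rw [hS1, hS2, ← Finset.sum_sub_distrib]
          exact (norm_sum_le _ _).trans (Finset.sum_le_sum hterm)
        have hstep1 : Real.exp (-μ * s) * ‖S₁ - S₂‖
            ≤ ∑ j ∈ J, CG * H * (Real.exp (-μ * s) * Real.exp (μ * τ j)) := by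
          calc Real.exp (-μ * s) * ‖S₁ - S₂‖
              ≤ Real.exp (-μ * s) * ∑ j ∈ J, CG * (Real.exp (μ * τ j) * H) :=
                mul_le_mul_of_nonneg_left hnorm (Real.exp_pos _).le
            _ = ∑ j ∈ J, CG * H * (Real.exp (-μ * s) * Real.exp (μ * τ j)) := by
                rw [Finset.mul_sum]; exact Finset.sum_congr rfl fun j _ => by ring
        have hterm2 : ∀ j ∈ J, Real.exp (-μ * s) * Real.exp (μ * τ j) ≤ r ^ (jm - j) := by
          intro j hj
          have hjle : j ≤ jm := hjm ▸ J.le_max' j hj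
          simp only [hJ, Finset.mem_filter, Finset.mem_Icc] at hj
          obtain ⟨⟨hj1, hjN⟩, hjs⟩ := hj
          have htel := tele j (jm - j) (by omega)
          have hee : j + (jm - j) = jm := by omega
          rw [hee] at htel
          have hrpow : (r : ℝ) ^ (jm - j) = Real.exp (((jm - j : ℕ) : ℝ) * (-μ * hstar)) := by
            rw [Real.exp_nat_mul]
          rw [← Real.exp_add, hrpow]
          apply Real.exp_le_exp.mpr
          nlinarith
        have hstep2 : ∑ j ∈ J, CG * H * (Real.exp (-μ * s) * Real.exp (μ * τ j))
            ≤ ∑ j ∈ J, CG * H * r ^ (jm - j) :=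
          Finset.sum_le_sum fun j hj => mul_le_mul_of_nonneg_left (hterm2 j hj)
            (mul_nonneg hCG hH0)
        have hstep3 : ∑ j ∈ J, CG * H * r ^ (jm - j)
            ≤ ∑ j ∈ Finset.Icc 1 jm, CG * H * r ^ (jm - j) := by
          apply Finset.sum_le_sum_of_subset_of_nonneg
          · intro j hj
            have hjle : j ≤ jm := hjm ▸ J.le_max' j hj
            simp only [hJ, Finset.mem_filter, Finset.mem_Icc] at hj
            exact Finset.mem_Icc.mpr ⟨hj.1.1, hjle⟩
          · intro j _ _
            exact mul_nonneg (mul_nonneg hCG hH0) (pow_nonneg hr0.le _)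
        have hstep4 : ∑ j ∈ Finset.Icc 1 jm, CG * H * r ^ (jm - j)
            = CG * H * ∑ d ∈ Finset.range jm, r ^ d := by
          rw [← Finset.mul_sum, geom_reindex]
        have hstep5 : ∑ d ∈ Finset.range jm, r ^ d ≤ ∑ d ∈ Finset.range N, r ^ d := by
          apply Finset.sum_le_sum_of_subset_of_nonneg
          · exact Finset.range_subset_range.mpr (by omega)
          · intro d _ _; exact pow_nonneg hr0.le d
        calc Real.exp (-μ * s) * ‖S₁ - S₂‖
            ≤ ∑ j ∈ Finset.Icc 1 jm, CG * H * r ^ (jm - j) :=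
              le_trans hstep1 (le_trans hstep2 hstep3)
          _ = CG * H * ∑ d ∈ Finset.range jm, r ^ d := hstep4
          _ ≤ CG * H * ∑ d ∈ Finset.range N, r ^ d :=
              mul_le_mul_of_nonneg_left hstep5 (mul_nonneg hCG hH0)
          _ = CG * (∑ d ∈ Finset.range N, r ^ d) * H := by ring
    -- the refined integral bound
    have hIfinal : Real.exp (-μ * s) * ‖I₁ - I₂‖
        ≤ Cf * ((1 - Real.exp (-μ * T)) / μ) * K := by
      have hx : Real.exp (-μ * s) * Real.exp (μ * s) = 1 := by
        rw [← Real.exp_add]; norm_num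
      have hy : Real.exp (-μ * s) * (Real.exp (μ * s) - 1) = 1 - Real.exp (-μ * s) := by
        rw [mul_sub, hx, mul_one]
      have hmono : Real.exp (-μ * T) ≤ Real.exp (-μ * s) :=
        Real.exp_le_exp.mpr (by nlinarith)
      calc Real.exp (-μ * s) * ‖I₁ - I₂‖
          ≤ Real.exp (-μ * s) * (Cf * K * ((Real.exp (μ * s) - 1) / μ)) :=
            mul_le_mul_of_nonneg_left hIbound (Real.exp_pos _).le
        _ = Cf * K * ((Real.exp (-μ * s) * (Real.exp (μ * s) - 1)) / μ) := by ring
        _ = Cf * K * ((1 - Real.exp (-μ * s)) / μ) := by rw [hy]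
        _ ≤ Cf * K * ((1 - Real.exp (-μ * T)) / μ) := by
            refine mul_le_mul_of_nonneg_left ?_ (mul_nonneg hCf hK0)
            have h5 : (1 - Real.exp (-μ * s)) ≤ (1 - Real.exp (-μ * T)) := by linarith
            have h6 := mul_le_mul_of_nonneg_right h5 (inv_nonneg.mpr hμ.le)
            simpa [div_eq_mul_inv] using h6
        _ = Cf * ((1 - Real.exp (-μ * T)) / μ) * K := by ring
    have hsplit : (h s + I₁ + S₁) - (h s + I₂ + S₂) = (I₁ - I₂) + (S₁ - S₂) := by abel
    rw [hsplit]
    calc Real.exp (-μ * s) * ‖(I₁ - I₂) + (S₁ - S₂)‖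
        ≤ Real.exp (-μ * s) * (‖I₁ - I₂‖ + ‖S₁ - S₂‖) :=
          mul_le_mul_of_nonneg_left (norm_add_le _ _) (Real.exp_pos _).le
      _ = Real.exp (-μ * s) * ‖I₁ - I₂‖ + Real.exp (-μ * s) * ‖S₁ - S₂‖ := mul_add _ _ _
      _ ≤ Cf * ((1 - Real.exp (-μ * T)) / μ) * K
          + CG * (∑ d ∈ Finset.range N, r ^ d) * H := add_le_add hIfinal hSbound
  -- assemble
  have hrN : Real.exp (-((N : ℝ) - 1) * μ * hstar) = r ^ (N - 1) := by
    rw [hr_def, ← Real.exp_nat_mul]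
    congr 1
    push_cast [Nat.cast_sub hN]
    ring
  have hgeom : (∑ d ∈ Finset.range N, r ^ d)
      = 1 + r * (1 - Real.exp (-((N : ℝ) - 1) * μ * hstar)) / (1 - r) := by
    rw [hrN]; exact geom_const r hr1 N hN
  refine le_trans (ciSup_le fun t : Icc (0:ℝ) T => hpoint (t : ℝ) t.2.1 t.2.2) (le_of_eq ?_)
  rw [hgeom, hr_def, hstar_def]
end

section
/- Let T > 0, N ≥ 1, C_f ≥ 0, C_G ≥ 0, 0 < τ_N ≤ T and h* > 0. For μ > 0 define a₁₁(μ) := C_f(1 − e^{−μT})/μ, a₁₂(μ) := C_G(1 + e^{−μh*}(1 − e^{−(N−1)μh*})/(1 − e^{−μh*})), a₂₁(μ) := C_f(1 − e^{−μτ_N})/μ, a₂₂(μ) := C_G e^{−μh*}(1 − e^{−μ(N−1)h*})/(1 − e^{−μh*}), and let A(μ) be the real 2×2 matrix with these entries. Then a₁₁(μ) → 0, a₂₁(μ) → 0, a₂₂(μ) → 0 as μ → ∞ while a₁₂(μ) remains bounded, and consequently there exists μ₀ > 0 such that for all μ ≥ μ₀ the matrix A(μ) satisfies |trace A(μ)|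 − 1 < det A(μ) < 1. -/
open Filter

private lemma exp_neg_tendsto_aux (a : ℝ) (ha : 0 < a) :
    Tendsto (fun μ : ℝ => Real.exp (-μ * a)) atTop (nhds 0) := by
  have h1 : Tendsto (fun μ : ℝ => -μ * a) atTop atBot :=
    Tendsto.atBot_mul_const ha tendsto_neg_atTop_atBot
  exact Real.tendsto_exp_atBot.comp h1

private lemma frac_tendsto_aux (a : ℝ) (ha : 0 < a) :
    Tendsto (fun μ : ℝ => (1 - Real.exp (-μ * a)) / μ) atTop (nhds 0) := by
  have h := ((tendsto_const_nhds (x := (1:ℝ))).sub (exp_neg_tendsto_aux a ha)).mul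
    tendsto_inv_atTop_zero
  simp only [div_eq_mul_inv]
  simpa only [mul_zero] using h

/-- The contraction matrix `A(μ)` with the entries `a₁₁(μ), a₁₂(μ), a₂₁(μ), a₂₂(μ)`
of equation (3.5):
`a₁₁(μ) = C_f (1−e^{−μT})/μ`, `a₁₂(μ) = C_G (1 + e^{−μh*}(1−e^{−(N−1)μh*})/(1−e^{−μh*}))`,
`a₂₁(μ) = C_f (1−e^{−μτ_N})/μ`, `a₂₂(μ) = C_G e^{−μh*}(1−e^{−μ(N−1)h*})/(1−e^{−μh*})`. -/
noncomputable def contractionMatrix (T τN hstar Cf CG : ℝ) (N : ℕ) (μ : ℝ) :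
    Matrix (Fin 2) (Fin 2) ℝ :=
  !![Cf * ((1 - Real.exp (-μ * T)) / μ),
     CG * (1 + Real.exp (-μ * hstar) *
       ((1 - Real.exp (-((N : ℝ) - 1) * μ * hstar)) / (1 - Real.exp (-μ * hstar))));
     Cf * ((1 - Real.exp (-μ * τN)) / μ),
     CG * (Real.exp (-μ * hstar) *
       ((1 - Real.exp (-μ * ((N : ℝ) - 1) * hstar)) / (1 - Real.exp (-μ * hstar))))]

/-- **Conclusion of Lemma 3.2.** The entries `a₁₁(μ), a₂₁(μ), a₂₂(μ)` of the contraction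
matrix `A(μ)` of (3.5) tend to `0` as `μ → ∞`, the entry `a₁₂(μ)` remains bounded, and
consequently there is `μ₀ > 0` such that for all `μ ≥ μ₀` the matrix `A(μ)` satisfies the
stability criterion `|trace A(μ)| − 1 < det A(μ) < 1`. -/
theorem contraction_matrix_stable_for_large_mu
    (T : ℝ) (hT : 0 < T) (N : ℕ) (hN : 1 ≤ N)
    (Cf CG : ℝ) (hCf : 0 ≤ Cf) (hCG : 0 ≤ CG)
    (τN : ℝ) (hτN : 0 < τN) (hτNT : τN ≤ T) (hstar : ℝ) (hhstar : 0 < hstar) :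
    (Tendsto (fun μ : ℝ => contractionMatrix T τN hstar Cf CG N μ 0 0) atTop (nhds 0)) ∧
    (Tendsto (fun μ : ℝ => contractionMatrix T τN hstar Cf CG N μ 1 0) atTop (nhds 0)) ∧
    (Tendsto (fun μ : ℝ => contractionMatrix T τN hstar Cf CG N μ 1 1) atTop (nhds 0)) ∧
    (∃ B : ℝ, ∀ᶠ μ : ℝ in atTop, |contractionMatrix T τN hstar Cf CG N μ 0 1| ≤ B) ∧
    (∃ μ₀ : ℝ, 0 < μ₀ ∧ ∀ μ : ℝ, μ₀ ≤ μ →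
      |Matrix.trace (contractionMatrix T τN hstar Cf CG N μ)| - 1 <
          Matrix.det (contractionMatrix T τN hstar Cf CG N μ) ∧
        Matrix.det (contractionMatrix T τN hstar Cf CG N μ) < 1) := by
  -- abbreviations for the four entries
  set f11 : ℝ → ℝ := fun μ => Cf * ((1 - Real.exp (-μ * T)) / μ) with hf11
  set f12 : ℝ → ℝ := fun μ => CG * (1 + Real.exp (-μ * hstar) *
      ((1 - Real.exp (-((N : ℝ) - 1) * μ * hstar)) / (1 - Real.exp (-μ * hstar)))) with hf12
  set f21 : ℝ → ℝ := fun μ => Cf * ((1 - Real.exp (-μ * τN)) / μ) with hf21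
  set f22 : ℝ → ℝ := fun μ => CG * (Real.exp (-μ * hstar) *
      ((1 - Real.exp (-μ * ((N : ℝ) - 1) * hstar)) / (1 - Real.exp (-μ * hstar)))) with hf22
  have h11 : Tendsto f11 atTop (nhds 0) := by
    simpa only [hf11, mul_zero] using (frac_tendsto_aux T hT).const_mul Cf
  have h21 : Tendsto f21 atTop (nhds 0) := by
    simpa only [hf21, mul_zero] using (frac_tendsto_aux τN hτN).const_mul Cf
  -- the exponential `exp (−(N−1)μh*)` converges to some limit L
  obtain ⟨L, hL⟩ : ∃ L : ℝ,
      Tendsto (fun μ : ℝ => Real.exp (-((N : ℝ) - 1) * μ * hstar)) atTop (nhds L) := by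
    rcases eq_or_lt_of_le (by exact_mod_cast hN : (1 : ℝ) ≤ (N : ℝ)) with h | h
    · exact ⟨1, by simp [← h]⟩
    · refine ⟨0, ?_⟩
      have hc : 0 < ((N : ℝ) - 1) * hstar := by
        have : 0 < (N : ℝ) - 1 := by linarith
        positivity
      have heq : (fun μ : ℝ => Real.exp (-((N : ℝ) - 1) * μ * hstar)) =
          fun μ : ℝ => Real.exp (-μ * (((N : ℝ) - 1) * hstar)) := by
        funext μ; congr 1; ring
      rw [heq]
      exact exp_neg_tendsto_aux _ hc
  have hden : Tendsto (fun μ : ℝ => 1 - Real.exp (-μ * hstar)) atTop (nhds 1) := by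
    simpa only [sub_zero] using (tendsto_const_nhds (x := (1:ℝ))).sub (exp_neg_tendsto_aux hstar hhstar)
  have hratio : Tendsto (fun μ : ℝ =>
      (1 - Real.exp (-((N : ℝ) - 1) * μ * hstar)) / (1 - Real.exp (-μ * hstar)))
      atTop (nhds (1 - L)) := by
    simpa only [Pi.div_def, Pi.div_apply, div_one] using
      ((tendsto_const_nhds (x := (1:ℝ))).sub hL).div hden one_ne_zero
  have hexp : Tendsto (fun μ : ℝ => Real.exp (-μ * hstar)) atTop (nhds 0) :=
    exp_neg_tendsto_aux hstar hhstar
  have heq22 : f22 = fun μ : ℝ => CG * (Real.exp (-μ * hstar) *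
      ((1 - Real.exp (-((N : ℝ) - 1) * μ * hstar)) / (1 - Real.exp (-μ * hstar)))) := by
    funext μ
    simp only [hf22]
    congr 3
    ring
  have h22 : Tendsto f22 atTop (nhds 0) := by
    rw [heq22]
    simpa only [zero_mul, mul_zero] using ((hexp.mul hratio).const_mul CG)
  have h12 : Tendsto f12 atTop (nhds CG) := by
    have := ((tendsto_const_nhds (x := (1 : ℝ))).add (hexp.mul hratio)).const_mul CG
    simpa only [hf12, zero_mul, add_zero, mul_one] using this
  -- trace and determinant as scalar functions
  have htrace : ∀ μ : ℝ, Matrix.trace (contractionMatrix T τN hstar Cf CG N μ) =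
      f11 μ + f22 μ := by
    intro μ
    simp [contractionMatrix, Matrix.trace_fin_two_of, hf11, hf22]
  have hdet : ∀ μ : ℝ, Matrix.det (contractionMatrix T τN hstar Cf CG N μ) =
      f11 μ * f22 μ - f12 μ * f21 μ := by
    intro μ
    simp [contractionMatrix, Matrix.det_fin_two_of, hf11, hf12, hf21, hf22]
  have htr0 : Tendsto (fun μ => |f11 μ + f22 μ|) atTop (nhds 0) := by
    simpa only [add_zero, abs_zero] using (h11.add h22).abs
  have hdet0 : Tendsto (fun μ => f11 μ * f22 μ - f12 μ * f21 μ) atTop (nhds 0) := by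
    simpa only [mul_zero, zero_mul, sub_zero] using (h11.mul h22).sub (h12.mul h21)
  have hev : ∀ᶠ μ : ℝ in atTop, |f11 μ + f22 μ| < 1/2 ∧
      f11 μ * f22 μ - f12 μ * f21 μ < 1/2 ∧
      -(1/2 : ℝ) < f11 μ * f22 μ - f12 μ * f21 μ := by
    filter_upwards [htr0.eventually_lt_const (by norm_num : (0:ℝ) < 1/2),
      hdet0.eventually_lt_const (by norm_num : (0:ℝ) < 1/2),
      hdet0.eventually_const_lt (by norm_num : -(1/2:ℝ) < 0)] with μ h1 h2 h3
    exact ⟨h1, h2, h3⟩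
  obtain ⟨a, ha⟩ := eventually_atTop.mp hev
  refine ⟨?_, ?_, ?_, ⟨|CG| + 1, ?_⟩, max a 1, lt_of_lt_of_le one_pos (le_max_right a 1), ?_⟩
  · simpa only [contractionMatrix, Matrix.of_apply, Matrix.cons_val', Matrix.cons_val_zero, Matrix.empty_val',
        Matrix.cons_val_fin_one, Matrix.cons_val_one, Matrix.head_cons, Matrix.head_fin_const, ← hf11] using h11
  · simpa only [contractionMatrix, Matrix.of_apply, Matrix.cons_val', Matrix.cons_val_zero, Matrix.empty_val',
        Matrix.cons_val_fin_one, Matrix.cons_val_one, Matrix.head_cons, Matrix.head_fin_const, ← hf21] using h21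
  · simpa only [contractionMatrix, Matrix.of_apply, Matrix.cons_val', Matrix.cons_val_zero, Matrix.empty_val',
        Matrix.cons_val_fin_one, Matrix.cons_val_one, Matrix.head_cons, Matrix.head_fin_const, ← hf22] using h22
  · have : ∀ᶠ μ : ℝ in atTop, |f12 μ| < |CG| + 1 :=
      h12.abs.eventually_lt_const (lt_add_one _)
    filter_upwards [this] with μ h
    have : contractionMatrix T τN hstar Cf CG N μ 0 1 = f12 μ := by
      simp [contractionMatrix, hf12]
    rw [this]
    exact le_of_lt h
  · intro μ hμ
    have hμa : a ≤ μ := le_trans (le_max_left a 1) hμ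
    obtain ⟨h1, h2, h3⟩ := ha μ hμa
    rw [htrace, hdet]
    constructor
    · linarith
    · linarith
end

section
/- With the impulsive Volterra setup (T > 0, times 0 = τ₀ < τ₁ < ⋯ < τ_N < τ_{N+1} = T, u(t) := a_i on [τ_{i−1},τ_i), h continuous, f and G continuous and Lipschitz in x with constants C_f, C_G), let x : [0,T] → ℝⁿ be the unique solution of the impulsive Volterra equation x(s) = h(s) + ∫₀^s f(s,t,x(t),u(t)) dt + ∑_{i : 0 < τ_i < s} G(s, τ_i, x(τ_i⁻), a_i, a_{i+1}). Define iterates by: ξ₍₀₎ any bounded function continuous on each (τ_{i−1},τ_i) with one-sided limits, η₍₀₎ ∈ (ℝⁿ)^N arbitrary, and for k ≥ 0: ξ₍k+1₎(s) := h(s) + ∫₀^s f(s,t,ξ₍k₎(t),u(t)) dt + ∑_{i : 0 < τ_i < s} G(s, τ_i, η₍k₎,i, a_i, a_{i+1}) and η₍k+1₎,i := h(τ_i) + ∫₀^{τ_i} f(τ_i,t,ξ₍k₎(t),u(t)) dt + ∑_{j=1}^{i−1} G(τ_i, τ_j, η₍k₎,j, a_j, a_{j+1}). Then for each i = 1,…,N+1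 the supremum over t ∈ (τ_{i−1}, τ_i) of |ξ₍k₎(t) − x(t)| tends to 0 as k → ∞, and η₍k₎,i → x(τ_i⁻) as k → ∞ for each i = 1,…,N. -/
open Set Filter


section IVT32aux
open MeasureTheory
namespace IVT32


/-- If `w (k+1) ≤ ε k + w k / 2` with `ε → 0`, `w ≥ 0`, then `w → 0`. -/
lemma tendsto_half (w ε : ℕ → ℝ) (hw0 : ∀ k, 0 ≤ w k)
    (hrec : ∀ k, w (k + 1) ≤ ε k + w k / 2) (hε : Tendsto ε atTop (nhds 0)) :
    Tendsto w atTop (nhds 0) := by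
  rw [Metric.tendsto_atTop]
  intro δ hδ
  have h4 : (0:ℝ) < δ / 4 := by linarith
  obtain ⟨K, hK⟩ := (Metric.tendsto_atTop.1 hε) (δ / 4) h4
  have hKe : ∀ k ≥ K, ε k ≤ δ / 4 := by
    intro k hk
    have := hK k hk
    rw [Real.dist_eq, sub_zero] at this
    exact (le_abs_self _).trans this.le
  have key : ∀ j, w (K + j) ≤ w K / 2 ^ j + δ / 2 := by
    intro j
    induction j with
    | zero => simpa using by linarith [hδ]
    | succ j ih =>
      have h1 := hrec (K + j)
      have h2 := hKe (K + j) (Nat.le_add_right _ _)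
      have : w (K + (j+1)) = w (K + j + 1) := by ring_nf
      rw [this]
      have hp : (0:ℝ) < 2 ^ j := by positivity
      calc w (K + j + 1) ≤ ε (K + j) + w (K + j) / 2 := h1
        _ ≤ δ / 4 + (w K / 2 ^ j + δ / 2) / 2 := by linarith
        _ = w K / 2 ^ (j + 1) + δ / 2 := by field_simp; ring
  have hwK1 : (0:ℝ) < w K + 1 := by linarith [hw0 K]
  obtain ⟨j₀, hj₀⟩ := exists_pow_lt_of_lt_one (div_pos h4 hwK1)
    (show (1:ℝ)/2 < 1 by norm_num)
  refine ⟨K + j₀, fun k hk => ?_⟩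
  have hkK : K ≤ k := le_trans (Nat.le_add_right _ _) hk
  obtain ⟨j, rfl⟩ := Nat.exists_eq_add_of_le hkK
  have hjj : j₀ ≤ j := by omega
  have hw : w (K + j) ≤ w K / 2 ^ j + δ / 2 := key j
  have h2j : ((1:ℝ)/2) ^ j ≤ ((1:ℝ)/2) ^ j₀ :=
    pow_le_pow_of_le_one (by norm_num) (by norm_num) hjj
  have hfin : w K / 2 ^ j < δ / 4 := by
    have : w K * ((1:ℝ)/2) ^ j ≤ w K * ((1:ℝ)/2) ^ j₀ :=
      mul_le_mul_of_nonneg_left h2j (hw0 K)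
    have h3 : w K * ((1:ℝ)/2) ^ j₀ < w K * (δ / 4 / (w K + 1)) + δ/4/(w K + 1) := by
      nlinarith [mul_le_mul_of_nonneg_left hj₀.le (hw0 K), div_pos h4 hwK1]
    have h4 : w K * (δ / 4 / (w K + 1)) + δ/4/(w K+1) = δ/4 := by field_simp
    have h5 : w K / 2 ^ j = w K * ((1:ℝ)/2) ^ j := by
      rw [div_pow, one_pow]; ring
    linarith
  rw [Real.dist_eq, sub_zero, abs_of_nonneg (hw0 _)]
  linarith




/-- Compose a function continuous on a measurable set with an a.e.-measurable map
landing a.e. in that set. -/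
lemma aux_comp {P : Type*} [TopologicalSpace P] [MeasurableSpace P] [BorelSpace P]
    {γ : Type*} [TopologicalSpace γ] [MeasurableSpace γ] [BorelSpace γ]
    [SecondCountableTopology γ] [TopologicalSpace.PseudoMetrizableSpace γ]
    {φ : P → γ} {s : Set P} (hs : MeasurableSet s) (hφ : ContinuousOn φ s)
    {μ : Measure ℝ} {F : ℝ → P} (hF : AEMeasurable F μ) (hmem : ∀ᵐ t ∂μ, F t ∈ s) :
    AEStronglyMeasurable (fun t => φ (F t)) μ := by
  classical
  rcases s.eq_empty_or_nonempty with rfl | ⟨p₀, hp₀⟩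
  · have hμ : μ = 0 := by
      have : ∀ᵐ t ∂μ, False := by simpa using hmem
      simpa [ae_iff] using this
    rw [hμ]; exact aestronglyMeasurable_zero_measure _
  · set F' := hF.mk F with hF'
    have hF'm : Measurable F' := hF.measurable_mk
    set F'' : ℝ → P := fun t => if F' t ∈ s then F' t else p₀ with hF''
    have hF''m : Measurable F'' := Measurable.ite (hF'm hs) hF'm measurable_const
    have hmem'' : ∀ t, F'' t ∈ s := fun t => by
      by_cases h : F' t ∈ s <;> simp [hF'', h, hp₀]
    have hmeas : Measurable fun t => φ (F'' t) := by
      have h1 : Measurable (fun t => (⟨F'' t, hmem'' t⟩ : s)) :=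
        Measurable.subtype_mk hF''m
      have h2 : Continuous (s.restrict φ) := continuousOn_iff_continuous_restrict.1 hφ
      exact h2.measurable.comp h1
    refine hmeas.aestronglyMeasurable.congr ?_
    filter_upwards [hF.ae_eq_mk, hmem] with t h1 h2
    have h3 : F' t ∈ s := by rw [hF', ← h1]; exact h2
    simp only [hF'', h3, if_true]
    rw [hF', ← h1]

variable {N : ℕ} {T : ℝ} {τ : ℕ → ℝ}

lemma tau_mono (hτmono : ∀ i j : ℕ, i < j → j ≤ N + 1 → τ i < τ j) :
    ∀ ⦃i j : ℕ⦄, i ≤ j → j ≤ N + 1 → τ i ≤ τ j := by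
  intro i j hij hj
  rcases eq_or_lt_of_le hij with rfl | hlt
  · exact le_rfl
  · exact (hτmono i j hlt hj).le

lemma exists_cover (hτ0 : τ 0 = 0) (hτT : τ (N + 1) = T)
    (hτmono : ∀ i j : ℕ, i < j → j ≤ N + 1 → τ i < τ j)
    {t : ℝ} (h0 : 0 ≤ t) (h1 : t < T) :
    ∃ i, 1 ≤ i ∧ i ≤ N + 1 ∧ τ (i - 1) ≤ t ∧ t < τ i := by
  classical
  have hP0 : τ 0 ≤ t := by rw [hτ0]; exact h0
  set g := Nat.findGreatest (fun j => τ j ≤ t) (N + 1) with hg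
  have hgP : τ g ≤ t := Nat.findGreatest_spec (P := fun j => τ j ≤ t) (Nat.zero_le _) hP0
  have hgle : g ≤ N + 1 := Nat.findGreatest_le _
  have hgN : g ≠ N + 1 := by
    intro e
    rw [e, hτT] at hgP
    linarith
  have hgN' : g + 1 ≤ N + 1 := by omega
  refine ⟨g + 1, by omega, hgN', by simpa using hgP, ?_⟩
  by_contra hc
  push_neg at hc
  exact Nat.findGreatest_is_greatest (P := fun j => τ j ≤ t)
    (k := g + 1) (n := N + 1) (by omega) hgN' hc

/-- Combine a.e. strong measurability on the open subintervals. -/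
lemma combine_meas (hτ0 : τ 0 = 0) (hτT : τ (N + 1) = T)
    (hτmono : ∀ i j : ℕ, i < j → j ≤ N + 1 → τ i < τ j)
    {γ : Type*} [TopologicalSpace γ] [TopologicalSpace.PseudoMetrizableSpace γ]
    (φ : ℝ → γ) (S : Set ℝ) (hsub : S ⊆ Ioc 0 T)
    (hp : ∀ i, 1 ≤ i → i ≤ N + 1 →
      AEStronglyMeasurable φ (volume.restrict (Ioo (τ (i - 1)) (τ i) ∩ S))) :
    AEStronglyMeasurable φ (volume.restrict S) := by
  classical
  set V : ℕ → Set ℝ := fun i => if 1 ≤ i ∧ i ≤ N + 1 then Ioo (τ (i - 1)) (τ i) ∩ S else ∅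
    with hV
  have hVm : AEStronglyMeasurable φ (volume.restrict (⋃ i, V i)) := by
    rw [aestronglyMeasurable_iUnion_iff]
    intro i
    by_cases hi : 1 ≤ i ∧ i ≤ N + 1
    · have : V i = Ioo (τ (i - 1)) (τ i) ∩ S := by simp [hV, hi]
      rw [this]; exact hp i hi.1 hi.2
    · have : V i = ∅ := by simp [hV, hi]
      rw [this, Measure.restrict_empty]
      exact aestronglyMeasurable_zero_measure _
  have hnull : volume (S \ ⋃ i, V i) = 0 := by
    have hsubF : S \ (⋃ i, V i) ⊆ τ '' (Iic (N + 1)) := by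
      rintro t ⟨htS, htV⟩
      have ht : t ∈ Ioc 0 T := hsub htS
      rcases eq_or_lt_of_le ht.2 with he | hlt
      · exact ⟨N + 1, Set.mem_Iic.2 le_rfl, by rw [hτT]; exact he.symm⟩
      · obtain ⟨i, hi1, hi2, hle, hlt'⟩ := exists_cover hτ0 hτT hτmono ht.1.le hlt
        rcases eq_or_lt_of_le hle with he | hlt''
        · exact ⟨i - 1, Set.mem_Iic.2 (by omega), he⟩
        · exfalso
          refine htV (mem_iUnion.2 ⟨i, ?_⟩)
          have : V i = Ioo (τ (i - 1)) (τ i) ∩ S := by simp [hV, hi1, hi2]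
          rw [this]
          exact ⟨⟨hlt'', hlt'⟩, htS⟩
    exact measure_mono_null hsubF (((finite_Iic (N + 1)).image τ).measure_zero _)
  have hae : S =ᵐ[volume] (((⋃ i, V i) ∩ S : Set ℝ)) := by
    rw [MeasureTheory.ae_eq_set]
    constructor
    · refine measure_mono_null ?_ hnull
      intro t ht
      exact ⟨ht.1, fun h3 => ht.2 ⟨h3, ht.1⟩⟩
    · have hemp : ((⋃ i, V i) ∩ S) \ S = ∅ := Set.diff_eq_empty.2 inter_subset_right
      rw [hemp]
      simp
  rw [Measure.restrict_congr_set hae]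
  exact hVm.mono_measure (Measure.restrict_mono inter_subset_left le_rfl)




variable {n m N : ℕ} {T : ℝ} {τ : ℕ → ℝ} {U : Set (Fin m → ℝ)} {a : ℕ → Fin m → ℝ}
variable {f : ℝ → ℝ → EuclideanSpace ℝ (Fin n) → (Fin m → ℝ) → EuclideanSpace ℝ (Fin n)}
variable {G : ℝ → ℝ → EuclideanSpace ℝ (Fin n) → (Fin m → ℝ) → (Fin m → ℝ) →
      EuclideanSpace ℝ (Fin n)}

lemma isCompact_DD (T : ℝ) : IsCompact {st : ℝ × ℝ | 0 ≤ st.2 ∧ st.2 ≤ st.1 ∧ st.1 ≤ T} := by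
  refine IsCompact.of_isClosed_subset (isCompact_Icc (a := ((0:ℝ), (0:ℝ))) (b := (T, T)))
    ?_ ?_
  · have h1 : IsClosed {st : ℝ × ℝ | 0 ≤ st.2} := isClosed_le continuous_const continuous_snd
    have h2 : IsClosed {st : ℝ × ℝ | st.2 ≤ st.1} := isClosed_le continuous_snd continuous_fst
    have h3 : IsClosed {st : ℝ × ℝ | st.1 ≤ T} := isClosed_le continuous_fst continuous_const
    have : {st : ℝ × ℝ | 0 ≤ st.2 ∧ st.2 ≤ st.1 ∧ st.1 ≤ T}
        = ({st : ℝ × ℝ | 0 ≤ st.2} ∩ ({st : ℝ × ℝ | st.2 ≤ st.1} ∩ {st : ℝ × ℝ | st.1 ≤ T})) := by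
      ext p; simp [mem_setOf_eq, mem_inter_iff, and_assoc]
    rw [this]
    exact h1.inter (h2.inter h3)
  · rintro ⟨s, t⟩ ⟨h1, h2, h3⟩
    exact ⟨⟨le_trans h1 h2, h1⟩, ⟨h3, le_trans h2 h3⟩⟩

lemma isCompact_AA (a : ℕ → Fin m → ℝ) (N : ℕ) :
    IsCompact (a '' {i | 1 ≤ i ∧ i ≤ N + 1}) :=
  Set.Finite.isCompact <| Set.Finite.image _ <|
    (finite_Iic (N + 1)).subset (fun i hi => Set.mem_Iic.2 hi.2)

lemma f_bound (hf : ContinuousOn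
      (fun p : (ℝ × ℝ) × EuclideanSpace ℝ (Fin n) × (Fin m → ℝ) => f p.1.1 p.1.2 p.2.1 p.2.2)
      (({st : ℝ × ℝ | 0 ≤ st.2 ∧ st.2 ≤ st.1 ∧ st.1 ≤ T}) ×ˢ ((univ : Set _) ×ˢ U)))
    (haU : ∀ i, 1 ≤ i → i ≤ N + 1 → a i ∈ U) (R : ℝ) :
    ∃ Mf, 0 ≤ Mf ∧ ∀ s t ξ' j, 0 ≤ t → t ≤ s → s ≤ T → ‖ξ'‖ ≤ R →
      1 ≤ j → j ≤ N + 1 → ‖f s t ξ' (a j)‖ ≤ Mf := by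
  set K := ({st : ℝ × ℝ | 0 ≤ st.2 ∧ st.2 ≤ st.1 ∧ st.1 ≤ T}) ×ˢ
    ((Metric.closedBall (0 : EuclideanSpace ℝ (Fin n)) R) ×ˢ (a '' {i | 1 ≤ i ∧ i ≤ N + 1}))
    with hK
  have hKc : IsCompact K :=
    (isCompact_DD T).prod ((isCompact_closedBall _ _).prod (isCompact_AA a N))
  have hKsub : K ⊆ ({st : ℝ × ℝ | 0 ≤ st.2 ∧ st.2 ≤ st.1 ∧ st.1 ≤ T}) ×ˢ
      ((univ : Set _) ×ˢ U) := by
    rintro ⟨p1, p2, p3⟩ ⟨h1, h2, h3⟩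
    refine ⟨h1, trivial, ?_⟩
    obtain ⟨j, hj, rfl⟩ := h3
    exact haU j hj.1 hj.2
  obtain ⟨Mf, hMf⟩ := hKc.exists_bound_of_continuousOn (hf.mono hKsub)
  refine ⟨max Mf 0, le_max_right _ _, ?_⟩
  intro s t ξ' j h0 h1 h2 hR hj1 hj2
  have hx : (((s, t), (ξ', a j)) : (ℝ × ℝ) × EuclideanSpace ℝ (Fin n) × (Fin m → ℝ)) ∈ K :=
    ⟨⟨h0, h1, h2⟩, ⟨mem_closedBall_zero_iff.2 hR, ⟨j, ⟨hj1, hj2⟩, rfl⟩⟩⟩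
  exact (hMf _ hx).trans (le_max_left _ _)

lemma G_bound (hG : ContinuousOn
      (fun p : (ℝ × ℝ) × EuclideanSpace ℝ (Fin n) × (Fin m → ℝ) × (Fin m → ℝ) =>
        G p.1.1 p.1.2 p.2.1 p.2.2.1 p.2.2.2)
      (({st : ℝ × ℝ | 0 ≤ st.2 ∧ st.2 ≤ st.1 ∧ st.1 ≤ T}) ×ˢ ((univ : Set _) ×ˢ (U ×ˢ U))))
    (haU : ∀ i, 1 ≤ i → i ≤ N + 1 → a i ∈ U)
    (Q : Set (EuclideanSpace ℝ (Fin n))) (hQ : IsCompact Q) :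
    ∃ MG, 0 ≤ MG ∧ ∀ s t q j j', 0 ≤ t → t ≤ s → s ≤ T → q ∈ Q →
      1 ≤ j → j ≤ N + 1 → 1 ≤ j' → j' ≤ N + 1 → ‖G s t q (a j) (a j')‖ ≤ MG := by
  set K := ({st : ℝ × ℝ | 0 ≤ st.2 ∧ st.2 ≤ st.1 ∧ st.1 ≤ T}) ×ˢ
    (Q ×ˢ ((a '' {i | 1 ≤ i ∧ i ≤ N + 1}) ×ˢ (a '' {i | 1 ≤ i ∧ i ≤ N + 1}))) with hK
  have hKc : IsCompact K :=
    (isCompact_DD T).prod (hQ.prod ((isCompact_AA a N).prod (isCompact_AA a N)))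
  have hKsub : K ⊆ ({st : ℝ × ℝ | 0 ≤ st.2 ∧ st.2 ≤ st.1 ∧ st.1 ≤ T}) ×ˢ
      ((univ : Set _) ×ˢ (U ×ˢ U)) := by
    rintro ⟨p1, p2, p3, p4⟩ ⟨h1, h2, h3, h4⟩
    refine ⟨h1, trivial, ?_, ?_⟩
    · obtain ⟨j, hj, rfl⟩ := h3; exact haU j hj.1 hj.2
    · obtain ⟨j, hj, rfl⟩ := h4; exact haU j hj.1 hj.2
  obtain ⟨MG, hMG⟩ := hKc.exists_bound_of_continuousOn (hG.mono hKsub)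
  refine ⟨max MG 0, le_max_right _ _, ?_⟩
  intro s t q j j' h0 h1 h2 hq hj1 hj2 hj1' hj2'
  have hx : (((s, t), (q, (a j, a j'))) :
      (ℝ × ℝ) × EuclideanSpace ℝ (Fin n) × (Fin m → ℝ) × (Fin m → ℝ)) ∈ K :=
    ⟨⟨h0, h1, h2⟩, hq, ⟨j, ⟨hj1, hj2⟩, rfl⟩, ⟨j', ⟨hj1', hj2'⟩, rfl⟩⟩
  exact (hMG _ hx).trans (le_max_left _ _)

lemma f_ucont (hf : ContinuousOn
      (fun p : (ℝ × ℝ) × EuclideanSpace ℝ (Fin n) × (Fin m → ℝ) => f p.1.1 p.1.2 p.2.1 p.2.2)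
      (({st : ℝ × ℝ | 0 ≤ st.2 ∧ st.2 ≤ st.1 ∧ st.1 ≤ T}) ×ˢ ((univ : Set _) ×ˢ U)))
    (haU : ∀ i, 1 ≤ i → i ≤ N + 1 → a i ∈ U) (R : ℝ) {ε : ℝ} (hε : 0 < ε) :
    ∃ δ, 0 < δ ∧ ∀ s s' t ξ' j, 0 ≤ t → t ≤ s → s ≤ T → t ≤ s' → s' ≤ T → ‖ξ'‖ ≤ R →
      1 ≤ j → j ≤ N + 1 → |s - s'| < δ → ‖f s t ξ' (a j) - f s' t ξ' (a j)‖ ≤ ε := by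
  set K := ({st : ℝ × ℝ | 0 ≤ st.2 ∧ st.2 ≤ st.1 ∧ st.1 ≤ T}) ×ˢ
    ((Metric.closedBall (0 : EuclideanSpace ℝ (Fin n)) R) ×ˢ (a '' {i | 1 ≤ i ∧ i ≤ N + 1}))
    with hK
  have hKc : IsCompact K :=
    (isCompact_DD T).prod ((isCompact_closedBall _ _).prod (isCompact_AA a N))
  have hKsub : K ⊆ ({st : ℝ × ℝ | 0 ≤ st.2 ∧ st.2 ≤ st.1 ∧ st.1 ≤ T}) ×ˢ
      ((univ : Set _) ×ˢ U) := by
    rintro ⟨p1, p2, p3⟩ ⟨h1, h2, h3⟩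
    refine ⟨h1, trivial, ?_⟩
    obtain ⟨j, hj, rfl⟩ := h3
    exact haU j hj.1 hj.2
  have huc := hKc.uniformContinuousOn_of_continuous (hf.mono hKsub)
  rw [Metric.uniformContinuousOn_iff] at huc
  obtain ⟨δ, hδ, hd⟩ := huc ε hε
  refine ⟨δ, hδ, ?_⟩
  intro s s' t ξ' j h0 h1 h2 h1' h2' hR hj1 hj2 habs
  have hx : (((s, t), (ξ', a j)) : (ℝ × ℝ) × EuclideanSpace ℝ (Fin n) × (Fin m → ℝ)) ∈ K :=
    ⟨⟨h0, h1, h2⟩, ⟨mem_closedBall_zero_iff.2 hR, ⟨j, ⟨hj1, hj2⟩, rfl⟩⟩⟩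
  have hy : (((s', t), (ξ', a j)) : (ℝ × ℝ) × EuclideanSpace ℝ (Fin n) × (Fin m → ℝ)) ∈ K :=
    ⟨⟨h0, h1', h2'⟩, ⟨mem_closedBall_zero_iff.2 hR, ⟨j, ⟨hj1, hj2⟩, rfl⟩⟩⟩
  have hdist : dist (((s, t), (ξ', a j)) : (ℝ × ℝ) × EuclideanSpace ℝ (Fin n) × (Fin m → ℝ))
      (((s', t), (ξ', a j))) < δ := by
    rw [Prod.dist_eq, Prod.dist_eq, Prod.dist_eq, dist_self, dist_self, dist_self,
      Real.dist_eq]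
    have e1 : |s - s'| ⊔ (0:ℝ) = |s - s'| := sup_eq_left.2 (abs_nonneg _)
    have e2 : (0:ℝ) ⊔ 0 = 0 := by simp
    rw [e1, e2, sup_eq_left.2 (abs_nonneg _)]
    exact habs
  have := hd _ hx _ hy hdist
  rw [dist_eq_norm] at this
  exact this.le




variable {n m N : ℕ} {T : ℝ} {τ : ℕ → ℝ} {U : Set (Fin m → ℝ)} {a : ℕ → Fin m → ℝ}
variable {u : ℝ → Fin m → ℝ}
variable {f : ℝ → ℝ → EuclideanSpace ℝ (Fin n) → (Fin m → ℝ) → EuclideanSpace ℝ (Fin n)}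

lemma ae_ne_restrict (S : Set ℝ) (c : ℝ) : ∀ᵐ t ∂(volume.restrict S), t ≠ c := by
  refine ae_iff.2 ?_
  have h1 : {t : ℝ | ¬ t ≠ c} = {c} := by ext t; simp
  rw [h1]
  exact le_antisymm ((Measure.restrict_apply_le _ _).trans_eq Real.volume_singleton) zero_le

lemma integrand_aesm
    (hτ0 : τ 0 = 0) (hτT : τ (N + 1) = T)
    (hτmono : ∀ i j : ℕ, i < j → j ≤ N + 1 → τ i < τ j)
    (haU : ∀ i, 1 ≤ i → i ≤ N + 1 → a i ∈ U)
    (hu : ∀ i, 1 ≤ i → i ≤ N + 1 → ∀ t ∈ Ico (τ (i - 1)) (τ i), u t = a i)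
    (hf : ContinuousOn
      (fun p : (ℝ × ℝ) × EuclideanSpace ℝ (Fin n) × (Fin m → ℝ) => f p.1.1 p.1.2 p.2.1 p.2.2)
      (({st : ℝ × ℝ | 0 ≤ st.2 ∧ st.2 ≤ st.1 ∧ st.1 ≤ T}) ×ˢ ((univ : Set _) ×ˢ U)))
    {g : ℝ → EuclideanSpace ℝ (Fin n)}
    (hg : AEStronglyMeasurable g (volume.restrict (Ioc 0 T)))
    {s s' : ℝ} (h0 : 0 ≤ s') (h1 : s' ≤ s) (h2 : s ≤ T) :
    AEStronglyMeasurable (fun t => f s t (g t) (u t)) (volume.restrict (Ioc 0 s')) := by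
  refine combine_meas hτ0 hτT hτmono _ _ (Ioc_subset_Ioc le_rfl (h1.trans h2)) ?_
  intro i hi1 hi2
  set P : Set ℝ := Ioo (τ (i - 1)) (τ i) ∩ Ioc 0 s' with hP
  have hPm : MeasurableSet P := measurableSet_Ioo.inter measurableSet_Ioc
  have hueq : ∀ t ∈ P, u t = a i := fun t ht => hu i hi1 hi2 t ⟨ht.1.1.le, ht.1.2⟩
  have hsub : P ⊆ Ioc 0 T := fun t ht => ⟨ht.2.1, ht.2.2.trans (h1.trans h2)⟩
  have hgP : AEMeasurable g (volume.restrict P) :=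
    (hg.mono_measure (Measure.restrict_mono hsub le_rfl)).aemeasurable
  have hFm : AEMeasurable (fun t => (((s, t), (g t, a i)) :
      (ℝ × ℝ) × EuclideanSpace ℝ (Fin n) × (Fin m → ℝ))) (volume.restrict P) :=
    (aemeasurable_const.prodMk aemeasurable_id).prodMk (hgP.prodMk aemeasurable_const)
  have hmem : ∀ᵐ t ∂(volume.restrict P), (((s, t), (g t, a i)) :
      (ℝ × ℝ) × EuclideanSpace ℝ (Fin n) × (Fin m → ℝ)) ∈
      ({st : ℝ × ℝ | 0 ≤ st.2 ∧ st.2 ≤ st.1 ∧ st.1 ≤ T}) ×ˢ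
      ((univ : Set (EuclideanSpace ℝ (Fin n))) ×ˢ ({a i} : Set (Fin m → ℝ))) := by
    filter_upwards [ae_restrict_mem hPm] with t ht
    exact ⟨⟨ht.2.1.le, ht.2.2.trans h1, h2⟩, trivial, rfl⟩
  have hset : MeasurableSet (({st : ℝ × ℝ | 0 ≤ st.2 ∧ st.2 ≤ st.1 ∧ st.1 ≤ T}) ×ˢ
      ((univ : Set (EuclideanSpace ℝ (Fin n))) ×ˢ ({a i} : Set (Fin m → ℝ)))) :=
    ((isCompact_DD T).isClosed.measurableSet).prod
      (MeasurableSet.univ.prod (measurableSet_singleton _))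
  have hcont : ContinuousOn
      (fun p : (ℝ × ℝ) × EuclideanSpace ℝ (Fin n) × (Fin m → ℝ) => f p.1.1 p.1.2 p.2.1 p.2.2)
      (({st : ℝ × ℝ | 0 ≤ st.2 ∧ st.2 ≤ st.1 ∧ st.1 ≤ T}) ×ˢ
      ((univ : Set (EuclideanSpace ℝ (Fin n))) ×ˢ ({a i} : Set (Fin m → ℝ)))) := by
    refine hf.mono ?_
    rintro ⟨p1, p2, p3⟩ ⟨hh1, hh2, hh3⟩
    have : p3 = a i := hh3
    exact ⟨hh1, trivial, this ▸ haU i hi1 hi2⟩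
  have base := aux_comp hset hcont hFm hmem
  refine base.congr ?_
  filter_upwards [ae_restrict_mem hPm] with t ht
  rw [hueq t ht]

lemma integrand_intble
    (hτ0 : τ 0 = 0) (hτT : τ (N + 1) = T)
    (hτmono : ∀ i j : ℕ, i < j → j ≤ N + 1 → τ i < τ j)
    (haU : ∀ i, 1 ≤ i → i ≤ N + 1 → a i ∈ U)
    (hu : ∀ i, 1 ≤ i → i ≤ N + 1 → ∀ t ∈ Ico (τ (i - 1)) (τ i), u t = a i)
    (hf : ContinuousOn
      (fun p : (ℝ × ℝ) × EuclideanSpace ℝ (Fin n) × (Fin m → ℝ) => f p.1.1 p.1.2 p.2.1 p.2.2)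
      (({st : ℝ × ℝ | 0 ≤ st.2 ∧ st.2 ≤ st.1 ∧ st.1 ≤ T}) ×ˢ ((univ : Set _) ×ˢ U)))
    {g : ℝ → EuclideanSpace ℝ (Fin n)} {R : ℝ}
    (hg : AEStronglyMeasurable g (volume.restrict (Ioc 0 T)))
    (hgbdd : ∀ t ∈ Ioc 0 T, ‖g t‖ ≤ R)
    {s s' : ℝ} (h0 : 0 ≤ s') (h1 : s' ≤ s) (h2 : s ≤ T) :
    IntervalIntegrable (fun t => f s t (g t) (u t)) volume 0 s' := by
  obtain ⟨Mf, hMf0, hMf⟩ := f_bound hf haU R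
  rw [intervalIntegrable_iff, uIoc_of_le h0]
  refine Integrable.mono' (g := fun _ => Mf) (integrableOn_const measure_Ioc_lt_top.ne)
    (integrand_aesm hτ0 hτT hτmono haU hu hf hg h0 h1 h2) ?_
  filter_upwards [ae_restrict_mem measurableSet_Ioc, ae_ne_restrict (Ioc 0 s') T]
    with t ht htT
  have htT' : t < T := lt_of_le_of_ne (ht.2.trans (h1.trans h2)) htT
  obtain ⟨i, hi1, hi2, hle, hlt⟩ := exists_cover hτ0 hτT hτmono ht.1.le htT'
  rw [hu i hi1 hi2 t ⟨hle, hlt⟩]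
  exact hMf s t (g t) i ht.1.le (ht.2.trans h1) h2
    (hgbdd t ⟨ht.1, ht.2.trans (h1.trans h2)⟩) hi1 hi2




variable {n m N : ℕ} {T : ℝ} {τ : ℕ → ℝ} {U : Set (Fin m → ℝ)} {a : ℕ → Fin m → ℝ}
variable {u : ℝ → Fin m → ℝ}
variable {f : ℝ → ℝ → EuclideanSpace ℝ (Fin n) → (Fin m → ℝ) → EuclideanSpace ℝ (Fin n)}

lemma volterra_cont
    (hT : 0 < T)
    (hτ0 : τ 0 = 0) (hτT : τ (N + 1) = T)
    (hτmono : ∀ i j : ℕ, i < j → j ≤ N + 1 → τ i < τ j)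
    (haU : ∀ i, 1 ≤ i → i ≤ N + 1 → a i ∈ U)
    (hu : ∀ i, 1 ≤ i → i ≤ N + 1 → ∀ t ∈ Ico (τ (i - 1)) (τ i), u t = a i)
    (hf : ContinuousOn
      (fun p : (ℝ × ℝ) × EuclideanSpace ℝ (Fin n) × (Fin m → ℝ) => f p.1.1 p.1.2 p.2.1 p.2.2)
      (({st : ℝ × ℝ | 0 ≤ st.2 ∧ st.2 ≤ st.1 ∧ st.1 ≤ T}) ×ˢ ((univ : Set _) ×ˢ U)))
    {g : ℝ → EuclideanSpace ℝ (Fin n)} {R : ℝ}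
    (hg : AEStronglyMeasurable g (volume.restrict (Ioc 0 T)))
    (hgbdd : ∀ t ∈ Ioc 0 T, ‖g t‖ ≤ R) :
    ContinuousOn (fun s => ∫ t in (0:ℝ)..s, f s t (g t) (u t)) (Icc 0 T) := by
  obtain ⟨Mf, hMf0, hMf⟩ := f_bound hf haU R
  intro s₀ hs₀
  rw [Metric.continuousWithinAt_iff]
  intro ε hε
  have hε' : 0 < ε / (2 * (T + 1)) := by positivity
  obtain ⟨δ₁, hδ₁, hd⟩ := f_ucont hf haU R hε'
  have hδ₂ : 0 < ε / (2 * (Mf + 1)) := by positivity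
  refine ⟨min δ₁ (ε / (2 * (Mf + 1))), lt_min hδ₁ hδ₂, ?_⟩
  have key : ∀ p q : ℝ, p ∈ Icc 0 T → q ∈ Icc 0 T → p ≤ q →
      |q - p| < min δ₁ (ε / (2 * (Mf + 1))) →
      ‖(∫ t in (0:ℝ)..q, f q t (g t) (u t)) - ∫ t in (0:ℝ)..p, f p t (g t) (u t)‖ < ε := by
    intro p q hp hq hpq hlt
    have I2 : IntervalIntegrable (fun t => f p t (g t) (u t)) volume 0 p :=
      integrand_intble hτ0 hτT hτmono haU hu hf hg hgbdd hp.1 le_rfl hp.2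
    have I3 : IntervalIntegrable (fun t => f q t (g t) (u t)) volume 0 p :=
      integrand_intble hτ0 hτT hτmono haU hu hf hg hgbdd hp.1 hpq hq.2
    have I1 : IntervalIntegrable (fun t => f q t (g t) (u t)) volume 0 q :=
      integrand_intble hτ0 hτT hτmono haU hu hf hg hgbdd hq.1 le_rfl hq.2
    have I4 : IntervalIntegrable (fun t => f q t (g t) (u t)) volume p q := by
      refine I1.mono_set ?_
      rw [uIcc_of_le hpq, uIcc_of_le hq.1]
      exact Icc_subset_Icc hp.1 le_rfl
    have hsplit : (∫ t in (0:ℝ)..q, f q t (g t) (u t))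
        = (∫ t in (0:ℝ)..p, f q t (g t) (u t)) + ∫ t in p..q, f q t (g t) (u t) :=
      (intervalIntegral.integral_add_adjacent_intervals I3 I4).symm
    have hdiff : (∫ t in (0:ℝ)..p, f q t (g t) (u t)) - (∫ t in (0:ℝ)..p, f p t (g t) (u t))
        = ∫ t in (0:ℝ)..p, (f q t (g t) (u t) - f p t (g t) (u t)) :=
      (intervalIntegral.integral_sub I3 I2).symm
    have heq : (∫ t in (0:ℝ)..q, f q t (g t) (u t)) - ∫ t in (0:ℝ)..p, f p t (g t) (u t)
        = (∫ t in (0:ℝ)..p, (f q t (g t) (u t) - f p t (g t) (u t)))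
          + ∫ t in p..q, f q t (g t) (u t) := by
      rw [hsplit, ← hdiff]; abel
    rw [heq]
    have B1 : ‖∫ t in (0:ℝ)..p, (f q t (g t) (u t) - f p t (g t) (u t))‖
        ≤ (ε / (2 * (T + 1))) * p := by
      rw [intervalIntegral.integral_of_le hp.1]
      refine le_trans (norm_integral_le_integral_norm _) ?_
      have hIn : IntegrableOn (fun t => ‖f q t (g t) (u t) - f p t (g t) (u t)‖)
          (Ioc 0 p) volume := by
        have := (I3.sub I2).norm
        rwa [intervalIntegrable_iff, uIoc_of_le hp.1] at this
      have hmono : ∫ t in Ioc 0 p, ‖f q t (g t) (u t) - f p t (g t) (u t)‖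
          ≤ ∫ _t in Ioc 0 p, (ε / (2 * (T + 1))) := by
        refine integral_mono_ae hIn (integrableOn_const measure_Ioc_lt_top.ne) ?_
        filter_upwards [ae_restrict_mem measurableSet_Ioc, ae_ne_restrict (Ioc 0 p) T]
          with t ht htT
        have htT' : t < T := lt_of_le_of_ne (ht.2.trans hp.2) htT
        obtain ⟨i, hi1, hi2, hle, hlt'⟩ := exists_cover hτ0 hτT hτmono ht.1.le htT'
        rw [hu i hi1 hi2 t ⟨hle, hlt'⟩]
        exact hd q p t (g t) i ht.1.le (ht.2.trans hpq) hq.2 ht.2 hp.2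
          (hgbdd t ⟨ht.1, ht.2.trans hp.2⟩) hi1 hi2
          (hlt.trans_le (min_le_left _ _))
      refine hmono.trans ?_
      rw [setIntegral_const, Real.volume_real_Ioc_of_le hp.1, smul_eq_mul]
      ring_nf
      exact le_rfl
    have B2 : ‖∫ t in p..q, f q t (g t) (u t)‖ ≤ Mf * (q - p) := by
      rw [intervalIntegral.integral_of_le hpq]
      refine le_trans (norm_integral_le_integral_norm _) ?_
      have hIn : IntegrableOn (fun t => ‖f q t (g t) (u t)‖) (Ioc p q) volume := by
        have := I4.norm
        rwa [intervalIntegrable_iff, uIoc_of_le hpq] at this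
      have hmono : ∫ t in Ioc p q, ‖f q t (g t) (u t)‖ ≤ ∫ _t in Ioc p q, Mf := by
        refine integral_mono_ae hIn (integrableOn_const measure_Ioc_lt_top.ne) ?_
        filter_upwards [ae_restrict_mem measurableSet_Ioc, ae_ne_restrict (Ioc p q) T]
          with t ht htT
        have htT' : t < T := lt_of_le_of_ne (ht.2.trans hq.2) htT
        obtain ⟨i, hi1, hi2, hle, hlt'⟩ := exists_cover hτ0 hτT hτmono (hp.1.trans ht.1.le) htT'
        rw [hu i hi1 hi2 t ⟨hle, hlt'⟩]
        exact hMf q t (g t) i (hp.1.trans ht.1.le) ht.2 hq.2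
          (hgbdd t ⟨hp.1.trans_lt ht.1, ht.2.trans hq.2⟩) hi1 hi2
      refine hmono.trans ?_
      rw [setIntegral_const, Real.volume_real_Ioc_of_le hpq, smul_eq_mul]
      ring_nf
      exact le_rfl
    have habs : q - p < ε / (2 * (Mf + 1)) := by
      have := hlt.trans_le (min_le_right _ _)
      rwa [abs_of_nonneg (by linarith : (0:ℝ) ≤ q - p)] at this
    have hB1' : (ε / (2 * (T + 1))) * p < ε / 2 := by
      rw [div_mul_eq_mul_div, div_lt_div_iff₀ (by linarith) (by norm_num : (0:ℝ) < 2)]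
      nlinarith [hp.1, hp.2]
    have hB2' : Mf * (q - p) < ε / 2 := by
      have h1 : Mf * (q - p) ≤ Mf * (ε / (2 * (Mf + 1))) :=
        mul_le_mul_of_nonneg_left habs.le hMf0
      have h2 : Mf * (ε / (2 * (Mf + 1))) < ε / 2 := by
        rw [mul_div_assoc', div_lt_div_iff₀ (by linarith) (by norm_num : (0:ℝ) < 2)]
        nlinarith
      linarith
    calc ‖(∫ t in (0:ℝ)..p, (f q t (g t) (u t) - f p t (g t) (u t)))
          + ∫ t in p..q, f q t (g t) (u t)‖
        ≤ ‖∫ t in (0:ℝ)..p, (f q t (g t) (u t) - f p t (g t) (u t))‖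
          + ‖∫ t in p..q, f q t (g t) (u t)‖ := norm_add_le _ _
      _ < ε := by linarith
  intro s hs hdist
  rw [Real.dist_eq] at hdist
  rcases le_total s s₀ with hle | hle
  · rw [dist_eq_norm, norm_sub_rev]
    exact key s s₀ hs hs₀ hle (by rwa [abs_sub_comm] at hdist)
  · rw [dist_eq_norm]
    exact key s₀ s hs₀ hs hle (by rwa [abs_sub_comm] at hdist ⊢)


lemma norm_int_le_of_ae {n : ℕ} {F : ℝ → EuclideanSpace ℝ (Fin n)} {c d C : ℝ} (hcd : c ≤ d)
    (hint : IntervalIntegrable F volume c d)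
    (hbd : ∀ᵐ t ∂(volume.restrict (Ioc c d)), ‖F t‖ ≤ C) :
    ‖∫ t in c..d, F t‖ ≤ C * (d - c) := by
  rw [intervalIntegral.integral_of_le hcd]
  refine le_trans (norm_integral_le_integral_norm _) ?_
  have hIn : IntegrableOn (fun t => ‖F t‖) (Ioc c d) volume := by
    rw [intervalIntegrable_iff, uIoc_of_le hcd] at hint
    exact hint.norm
  have hmono := integral_mono_ae hIn
    (integrableOn_const measure_Ioc_lt_top.ne : IntegrableOn (fun _ => C) (Ioc c d) volume)
    hbd
  rw [setIntegral_const, Real.volume_real_Ioc_of_le hcd, smul_eq_mul] at hmono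
  linarith

lemma real_int_le_of_ae {F : ℝ → ℝ} {c d C : ℝ} (hcd : c ≤ d)
    (hint : IntervalIntegrable F volume c d)
    (hbd : ∀ᵐ t ∂(volume.restrict (Ioc c d)), F t ≤ C) :
    (∫ t in c..d, F t) ≤ C * (d - c) := by
  rw [intervalIntegral.integral_of_le hcd]
  have hIn : IntegrableOn F (Ioc c d) volume := by
    rwa [intervalIntegrable_iff, uIoc_of_le hcd] at hint
  have hmono := integral_mono_ae hIn
    (integrableOn_const measure_Ioc_lt_top.ne : IntegrableOn (fun _ => C) (Ioc c d) volume)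
    hbd
  rw [setIntegral_const, Real.volume_real_Ioc_of_le hcd, smul_eq_mul] at hmono
  linarith

lemma filter_eq {N : ℕ} {τ : ℕ → ℝ}
    (hτmono : ∀ i j : ℕ, i < j → j ≤ N + 1 → τ i < τ j)
    {i : ℕ} {s : ℝ} (hi1 : 1 ≤ i) (hiN : i ≤ N + 1) (h1 : τ (i - 1) < s) (h2 : s ≤ τ i) :
    (Finset.Icc 1 N).filter (fun j => τ j < s) = Finset.Icc 1 (i - 1) := by
  ext j
  simp only [Finset.mem_filter, Finset.mem_Icc]
  constructor
  · rintro ⟨⟨hj1, hjN⟩, hjs⟩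
    refine ⟨hj1, ?_⟩
    by_contra hc
    have hij : i ≤ j := by omega
    have : τ i ≤ τ j := tau_mono hτmono hij (by omega)
    linarith
  · rintro ⟨hj1, hji⟩
    have hjN : j ≤ N := by omega
    have : τ j ≤ τ (i - 1) := tau_mono hτmono hji (by omega)
    exact ⟨⟨hj1, hjN⟩, by linarith⟩

end IVT32
end IVT32aux

set_option maxHeartbeats 2000000 in
/-- **Theorem 3.2.** The fixed-point iteration (3.6) for the impulsive Volterra equation
converges to the solution: `sup_{t ∈ (τ_{i−1},τ_i)} |ξ₍k₎(t) − x(t)| → 0` for each subinterval,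
and `η₍k₎,i → x(τ_i⁻)` for each `i = 1, …, N`. -/
theorem impulsive_volterra_iteration_converges
    (n m N : ℕ) (hN : 1 ≤ N) (T : ℝ) (hT : 0 < T)
    (τ : ℕ → ℝ) (hτ0 : τ 0 = 0) (hτT : τ (N + 1) = T)
    (hτmono : ∀ i j : ℕ, i < j → j ≤ N + 1 → τ i < τ j)
    (U : Set (Fin m → ℝ)) (a : ℕ → (Fin m → ℝ)) (haU : ∀ i, 1 ≤ i → i ≤ N + 1 → a i ∈ U)
    (u : ℝ → (Fin m → ℝ))
    (hu : ∀ i, 1 ≤ i → i ≤ N + 1 → ∀ t ∈ Ico (τ (i - 1)) (τ i), u t = a i)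
    (h : ℝ → EuclideanSpace ℝ (Fin n)) (hh : ContinuousOn h (Icc 0 T))
    (f : ℝ → ℝ → EuclideanSpace ℝ (Fin n) → (Fin m → ℝ) → EuclideanSpace ℝ (Fin n))
    (G : ℝ → ℝ → EuclideanSpace ℝ (Fin n) → (Fin m → ℝ) → (Fin m → ℝ) →
      EuclideanSpace ℝ (Fin n))
    (hf : ContinuousOn
      (fun p : (ℝ × ℝ) × EuclideanSpace ℝ (Fin n) × (Fin m → ℝ) => f p.1.1 p.1.2 p.2.1 p.2.2)
      (({st : ℝ × ℝ | 0 ≤ st.2 ∧ st.2 ≤ st.1 ∧ st.1 ≤ T}) ×ˢ ((univ : Set _) ×ˢ U)))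
    (hG : ContinuousOn
      (fun p : (ℝ × ℝ) × EuclideanSpace ℝ (Fin n) × (Fin m → ℝ) × (Fin m → ℝ) =>
        G p.1.1 p.1.2 p.2.1 p.2.2.1 p.2.2.2)
      (({st : ℝ × ℝ | 0 ≤ st.2 ∧ st.2 ≤ st.1 ∧ st.1 ≤ T}) ×ˢ ((univ : Set _) ×ˢ (U ×ˢ U))))
    (Cf CG : ℝ)
    (hfLip : ∀ s t : ℝ, 0 ≤ t → t ≤ s → s ≤ T → ∀ α ∈ U,
      ∀ x₁ x₂ : EuclideanSpace ℝ (Fin n), ‖f s t x₁ α - f s t x₂ α‖ ≤ Cf * ‖x₁ - x₂‖)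
    (hGLip : ∀ s t : ℝ, 0 ≤ t → t ≤ s → s ≤ T → ∀ α ∈ U, ∀ β ∈ U,
      ∀ x₁ x₂ : EuclideanSpace ℝ (Fin n), ‖G s t x₁ α β - G s t x₂ α β‖ ≤ CG * ‖x₁ - x₂‖)
    -- the solution `x` of the impulsive Volterra equation, with left limits `xlim i = x(τ_i⁻)`:
    (x : ℝ → EuclideanSpace ℝ (Fin n)) (xlim : ℕ → EuclideanSpace ℝ (Fin n))
    (hxbdd : ∃ M : ℝ, ∀ t ∈ Icc 0 T, ‖x t‖ ≤ M)
    (hxcont : ∀ i, 1 ≤ i → i ≤ N + 1 → ContinuousOn x (Ioo (τ (i - 1)) (τ i)))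
    (hxrlim : ∀ i, i ≤ N → ∃ Lp, Tendsto x (nhdsWithin (τ i) (Ioi (τ i))) (nhds Lp))
    (hxlim : ∀ i, 1 ≤ i → i ≤ N + 1 →
      Tendsto x (nhdsWithin (τ i) (Iio (τ i))) (nhds (xlim i)))
    (hxeq : ∀ s ∈ Icc 0 T,
      x s = h s + (∫ t in (0:ℝ)..s, f s t (x t) (u t)) +
        ∑ i ∈ (Finset.Icc 1 N).filter (fun i => τ i < s),
          G s (τ i) (xlim i) (a i) (a (i + 1)))
    -- the iterates `(ξ₍k₎, η₍k₎)` of the scheme (3.6), with arbitrary admissible initial data: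
    (ξ : ℕ → ℝ → EuclideanSpace ℝ (Fin n)) (η : ℕ → ℕ → EuclideanSpace ℝ (Fin n))
    (hξ0bdd : ∃ M : ℝ, ∀ t ∈ Icc 0 T, ‖ξ 0 t‖ ≤ M)
    (hξ0cont : ∀ i, 1 ≤ i → i ≤ N + 1 → ContinuousOn (ξ 0) (Ioo (τ (i - 1)) (τ i)))
    (hξ0lim : (∀ i, i ≤ N → ∃ Lp, Tendsto (ξ 0) (nhdsWithin (τ i) (Ioi (τ i))) (nhds Lp)) ∧
      (∀ i, 1 ≤ i → i ≤ N + 1 →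
        ∃ Lm, Tendsto (ξ 0) (nhdsWithin (τ i) (Iio (τ i))) (nhds Lm)))
    (hξrec : ∀ k : ℕ, ∀ s ∈ Icc 0 T,
      ξ (k + 1) s = h s + (∫ t in (0:ℝ)..s, f s t (ξ k t) (u t)) +
        ∑ i ∈ (Finset.Icc 1 N).filter (fun i => τ i < s),
          G s (τ i) (η k i) (a i) (a (i + 1)))
    (hηrec : ∀ k : ℕ, ∀ i, 1 ≤ i → i ≤ N →
      η (k + 1) i = h (τ i) + (∫ t in (0:ℝ)..(τ i), f (τ i) t (ξ k t) (u t)) +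
        ∑ j ∈ Finset.Icc 1 (i - 1), G (τ i) (τ j) (η k j) (a j) (a (j + 1))) :
    (∀ i, 1 ≤ i → i ≤ N + 1 →
      Tendsto (fun k : ℕ => ⨆ t : Ioo (τ (i - 1)) (τ i), ‖ξ k t - x t‖) atTop (nhds 0)) ∧
    (∀ i, 1 ≤ i → i ≤ N → Tendsto (fun k : ℕ => η k i) atTop (nhds (xlim i))) := by
  classical
  open MeasureTheory IVT32 in
  obtain ⟨Mx0, hMx0⟩ := hxbdd
  set Cf' := max Cf 0 with hCf'def
  set CG' := max CG 0 with hCG'def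
  have hCf'0 : 0 ≤ Cf' := le_max_right _ _
  have hCG'0 : 0 ≤ CG' := le_max_right _ _
  set lam := 2 * Cf' + 1 with hlamdef
  have hlam0 : 0 < lam := by simp only [hlamdef]; linarith
  have hτnn : ∀ i, i ≤ N + 1 → 0 ≤ τ i := fun i hi => by
    have := tau_mono hτmono (Nat.zero_le i) hi; rwa [hτ0] at this
  have hτle : ∀ i, i ≤ N + 1 → τ i ≤ T := fun i hi => by
    have := tau_mono hτmono hi le_rfl; rwa [hτT] at this
  set Mx := max Mx0 0 with hMxdef
  have hMx : ∀ t ∈ Ioc 0 T, ‖x t‖ ≤ Mx :=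
    fun t ht => le_trans (hMx0 t ⟨ht.1.le, ht.2⟩) (le_max_left _ _)
  -- measurability of x
  have hxmeas : AEStronglyMeasurable x (volume.restrict (Ioc 0 T)) := by
    refine combine_meas hτ0 hτT hτmono x (Ioc 0 T) Subset.rfl ?_
    intro i hi1 hi2
    exact ((hxcont i hi1 hi2).mono inter_subset_left).aestronglyMeasurable
      (measurableSet_Ioo.inter measurableSet_Ioc)
  -- measurability and boundedness of the iterates
  have hξmb : ∀ k, AEStronglyMeasurable (ξ k) (volume.restrict (Ioc 0 T)) ∧
      ∃ R, 0 ≤ R ∧ ∀ t ∈ Icc 0 T, ‖ξ k t‖ ≤ R := by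
    intro k
    induction k with
    | zero =>
      constructor
      · refine combine_meas hτ0 hτT hτmono _ (Ioc 0 T) Subset.rfl ?_
        intro i hi1 hi2
        exact ((hξ0cont i hi1 hi2).mono inter_subset_left).aestronglyMeasurable
          (measurableSet_Ioo.inter measurableSet_Ioc)
      · obtain ⟨R, hR⟩ := hξ0bdd
        exact ⟨max R 0, le_max_right _ _, fun t ht => (hR t ht).trans (le_max_left _ _)⟩
    | succ k ih =>
      obtain ⟨hm, R, hR0, hR⟩ := ih
      have hRIoc : ∀ t ∈ Ioc 0 T, ‖ξ k t‖ ≤ R := fun t ht => hR t ⟨ht.1.le, ht.2⟩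
      obtain ⟨Mf, hMf0, hMf⟩ := f_bound hf haU R
      have hQc : IsCompact (η k '' (Icc 1 N : Set ℕ)) :=
        (Set.Finite.image _ (finite_Icc 1 N)).isCompact
      obtain ⟨MG, hMG0, hMG⟩ := G_bound hG haU _ hQc
      obtain ⟨Mh, hMh⟩ := isCompact_Icc.exists_bound_of_continuousOn hh
      have hMh0 : 0 ≤ Mh := le_trans (norm_nonneg _) (hMh 0 ⟨le_rfl, hT.le⟩)
      constructor
      · -- measurability of ξ (k+1)
        have hΦ : ContinuousOn (fun s => ∫ t in (0:ℝ)..s, f s t (ξ k t) (u t)) (Icc 0 T) :=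
          volterra_cont hT hτ0 hτT hτmono haU hu hf hm hRIoc
        have hsum : AEStronglyMeasurable (fun s => ∑ j ∈ Finset.Icc 1 N,
            Set.indicator (Ioi (τ j)) (fun s' => G s' (τ j) (η k j) (a j) (a (j + 1))) s)
            (volume.restrict (Ioc 0 T)) := by
          refine Finset.aestronglyMeasurable_fun_sum _ ?_
          intro j hj
          rw [Finset.mem_Icc] at hj
          rw [aestronglyMeasurable_indicator_iff measurableSet_Ioi,
            Measure.restrict_restrict measurableSet_Ioi]
          have hGc : ContinuousOn (fun s' => G s' (τ j) (η k j) (a j) (a (j + 1)))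
              (Ioi (τ j) ∩ Ioc 0 T) := by
            have hinner : Continuous (fun s' : ℝ => (((s', τ j), (η k j, (a j, a (j + 1)))) :
                (ℝ × ℝ) × EuclideanSpace ℝ (Fin n) × (Fin m → ℝ) × (Fin m → ℝ))) :=
              (continuous_id.prodMk continuous_const).prodMk continuous_const
            refine hG.comp hinner.continuousOn ?_
            intro s' hs'
            exact ⟨⟨hτnn j (by omega), le_of_lt hs'.1, hs'.2.2⟩, trivial,
              haU j (by omega) (by omega), haU (j + 1) (by omega) (by omega)⟩
          exact hGc.aestronglyMeasurable (measurableSet_Ioi.inter measurableSet_Ioc)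
        have hhm : AEStronglyMeasurable h (volume.restrict (Ioc 0 T)) :=
          (hh.aestronglyMeasurable measurableSet_Icc).mono_measure
            (Measure.restrict_mono Ioc_subset_Icc_self le_rfl)
        have hΦm : AEStronglyMeasurable (fun s => ∫ t in (0:ℝ)..s, f s t (ξ k t) (u t))
            (volume.restrict (Ioc 0 T)) :=
          (hΦ.aestronglyMeasurable measurableSet_Icc).mono_measure
            (Measure.restrict_mono Ioc_subset_Icc_self le_rfl)
        refine ((hhm.add hΦm).add hsum).congr ?_
        filter_upwards [ae_restrict_mem measurableSet_Ioc] with s hs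
        rw [hξrec k s ⟨hs.1.le, hs.2⟩]
        have hfl : ∑ j ∈ (Finset.Icc 1 N).filter (fun j => τ j < s),
            G s (τ j) (η k j) (a j) (a (j + 1))
            = ∑ j ∈ Finset.Icc 1 N,
            Set.indicator (Ioi (τ j)) (fun s' => G s' (τ j) (η k j) (a j) (a (j + 1))) s := by
          rw [Finset.sum_filter]
          refine Finset.sum_congr rfl fun j _ => ?_
          rw [Set.indicator_apply]
          simp [mem_Ioi]
        simp only [Pi.add_apply]
        rw [hfl]
      · -- boundedness of ξ (k+1)
        refine ⟨Mh + Mf * T + N * MG, by positivity, ?_⟩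
        intro s hs
        rw [hξrec k s hs]
        have hb1 : ‖h s‖ ≤ Mh := hMh s hs
        have hb2 : ‖∫ t in (0:ℝ)..s, f s t (ξ k t) (u t)‖ ≤ Mf * s := by
          have hae : ∀ᵐ t ∂(volume.restrict (Ioc 0 s)), ‖f s t (ξ k t) (u t)‖ ≤ Mf := by
            filter_upwards [ae_restrict_mem measurableSet_Ioc, ae_ne_restrict (Ioc 0 s) T]
              with t ht htT
            have htT' : t < T := lt_of_le_of_ne (ht.2.trans hs.2) htT
            obtain ⟨i, hi1, hi2, hle, hlt⟩ := exists_cover hτ0 hτT hτmono ht.1.le htT'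
            rw [hu i hi1 hi2 t ⟨hle, hlt⟩]
            exact hMf s t _ i ht.1.le ht.2 hs.2 (hRIoc t ⟨ht.1, ht.2.trans hs.2⟩) hi1 hi2
          have hmain := norm_int_le_of_ae (n := n) hs.1
            (integrand_intble hτ0 hτT hτmono haU hu hf hm hRIoc hs.1 le_rfl hs.2) hae
          simpa using hmain
        have hb3 : ‖∑ j ∈ (Finset.Icc 1 N).filter (fun j => τ j < s),
            G s (τ j) (η k j) (a j) (a (j + 1))‖ ≤ N * MG := by
          refine le_trans (norm_sum_le _ _) ?_
          have hterm : ∀ j ∈ (Finset.Icc 1 N).filter (fun j => τ j < s),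
              ‖G s (τ j) (η k j) (a j) (a (j + 1))‖ ≤ MG := by
            intro j hj
            rw [Finset.mem_filter, Finset.mem_Icc] at hj
            exact hMG s (τ j) _ j (j + 1) (hτnn j (by omega)) hj.2.le hs.2
              ⟨j, ⟨hj.1.1, hj.1.2⟩, rfl⟩ (by omega) (by omega) (by omega) (by omega)
          refine le_trans (Finset.sum_le_sum hterm) ?_
          rw [Finset.sum_const, nsmul_eq_mul]
          refine mul_le_mul_of_nonneg_right ?_ hMG0
          have hcard : ((Finset.Icc 1 N).filter (fun j => τ j < s)).card ≤ N :=
            le_trans (Finset.card_filter_le _ _) (by simp [Nat.card_Icc])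
          exact_mod_cast hcard
        have hMfs : Mf * s ≤ Mf * T := mul_le_mul_of_nonneg_left hs.2 hMf0
        calc ‖h s + (∫ t in (0:ℝ)..s, f s t (ξ k t) (u t)) +
              ∑ j ∈ (Finset.Icc 1 N).filter (fun j => τ j < s),
                G s (τ j) (η k j) (a j) (a (j + 1))‖
            ≤ ‖h s + (∫ t in (0:ℝ)..s, f s t (ξ k t) (u t))‖ +
              ‖∑ j ∈ (Finset.Icc 1 N).filter (fun j => τ j < s),
                G s (τ j) (η k j) (a j) (a (j + 1))‖ := norm_add_le _ _
          _ ≤ (‖h s‖ + ‖∫ t in (0:ℝ)..s, f s t (ξ k t) (u t)‖) + N * MG :=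
              add_le_add (norm_add_le _ _) hb3
          _ ≤ Mh + Mf * T + N * MG := by linarith
  -- bound for the differences
  have hbddS : ∀ k, ∃ R, ∀ t ∈ Icc 0 T, ‖ξ k t - x t‖ ≤ R := by
    intro k
    obtain ⟨_, R, _, hR⟩ := hξmb k
    exact ⟨R + Mx, fun t ht => (norm_sub_le _ _).trans
      (add_le_add (hR t ht) (le_trans (hMx0 t ht) (le_max_left _ _)))⟩
  have hbddX : ∀ (k : ℕ) (c d : ℝ), 0 ≤ c → d ≤ T →
      BddAbove (range fun t : Ioo c d => ‖ξ k t - x t‖) := by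
    intro k c d hc hd
    obtain ⟨R, hR⟩ := hbddS k
    refine ⟨R, ?_⟩
    rintro _ ⟨t, rfl⟩
    exact hR t ⟨hc.trans t.2.1.le, t.2.2.le.trans hd⟩
  have hSnnX : ∀ (c d : ℝ) (k : ℕ), 0 ≤ ⨆ t : Ioo c d, ‖ξ k t - x t‖ :=
    fun c d k => Real.iSup_nonneg fun t => norm_nonneg _
  -- interval integrability of the norm-difference
  have intnorm : ∀ (k : ℕ) (c d : ℝ), 0 ≤ c → d ≤ T → c ≤ d →
      IntervalIntegrable (fun t => ‖ξ k t - x t‖) volume c d := by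
    intro k c d hc hd hcd
    obtain ⟨R, hR⟩ := hbddS k
    rw [intervalIntegrable_iff, uIoc_of_le hcd]
    have hsub : Ioc c d ⊆ Ioc 0 T := Ioc_subset_Ioc hc hd
    have hmeas : AEStronglyMeasurable (fun t => ‖ξ k t - x t‖) (volume.restrict (Ioc c d)) :=
      (((hξmb k).1.sub hxmeas).norm).mono_measure (Measure.restrict_mono hsub le_rfl)
    refine Integrable.mono' (g := fun _ => R)
      (integrableOn_const measure_Ioc_lt_top.ne) hmeas ?_
    filter_upwards [ae_restrict_mem measurableSet_Ioc] with t ht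
    rw [norm_norm]
    exact hR t ⟨hc.trans ht.1.le, ht.2.trans hd⟩
  -- the integral of the difference over [0, τ I] is controlled by the sups
  have hint0 : ∀ (k I : ℕ), I ≤ N + 1 →
      (∫ t in (0:ℝ)..(τ I), ‖ξ k t - x t‖)
        ≤ ∑ j ∈ Finset.range I, T * (⨆ t : Ioo (τ j) (τ (j + 1)), ‖ξ k t - x t‖) := by
    intro k I hI
    have hpieces : ∀ j < I, IntervalIntegrable (fun t => ‖ξ k t - x t‖) volume (τ j) (τ (j + 1)) :=
      fun j hj => intnorm k (τ j) (τ (j + 1)) (hτnn j (by omega)) (hτle (j + 1) (by omega))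
        (tau_mono hτmono (Nat.le_succ j) (by omega))
    have hsum := intervalIntegral.sum_integral_adjacent_intervals (μ := volume)
      (a := τ) (n := I) hpieces
    rw [show (0:ℝ) = τ 0 from hτ0.symm, ← hsum]
    refine Finset.sum_le_sum ?_
    intro j hj
    rw [Finset.mem_range] at hj
    have hj1 : j + 1 ≤ N + 1 := by omega
    have hmono' : τ j ≤ τ (j + 1) := tau_mono hτmono (Nat.le_succ j) hj1
    have hb : (∫ t in (τ j)..(τ (j + 1)), ‖ξ k t - x t‖)
        ≤ (⨆ t : Ioo (τ j) (τ (j + 1)), ‖ξ k t - x t‖) * (τ (j + 1) - τ j) := by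
      refine real_int_le_of_ae hmono' (hpieces j hj) ?_
      filter_upwards [ae_restrict_mem measurableSet_Ioc, ae_ne_restrict (Ioc (τ j) (τ (j+1))) (τ (j + 1))]
        with t ht htne
      have htIoo : t ∈ Ioo (τ j) (τ (j + 1)) := ⟨ht.1, lt_of_le_of_ne ht.2 htne⟩
      exact le_ciSup (hbddX k (τ j) (τ (j + 1)) (hτnn j (by omega)) (hτle (j + 1) hj1))
        (⟨t, htIoo⟩ : Ioo (τ j) (τ (j + 1)))
    refine hb.trans ?_
    have h1 : τ (j + 1) - τ j ≤ T := by
      have := hτnn j (by omega); have := hτle (j + 1) hj1; linarith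
    calc (⨆ t : Ioo (τ j) (τ (j + 1)), ‖ξ k t - x t‖) * (τ (j + 1) - τ j)
        ≤ (⨆ t : Ioo (τ j) (τ (j + 1)), ‖ξ k t - x t‖) * T :=
          mul_le_mul_of_nonneg_left h1 (hSnnX _ _ _)
      _ = T * (⨆ t : Ioo (τ j) (τ (j + 1)), ‖ξ k t - x t‖) := mul_comm _ _
  -- identification of the left limits
  have hxlimeq : ∀ i, 1 ≤ i → i ≤ N → xlim i = x (τ i) := by
    intro i hi1 hiN
    have hiN1 : i ≤ N + 1 := by omega
    have hlt : τ (i - 1) < τ i := hτmono (i - 1) i (by omega) hiN1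
    haveI hne : (nhdsWithin (τ i) (Ioo (τ (i - 1)) (τ i))).NeBot := by
      rw [nhdsWithin_Ioo_eq_nhdsLT hlt]
      exact nhdsLT_neBot _
    have hmemIcc : ∀ s ∈ Ioo (τ (i - 1)) (τ i), s ∈ Icc 0 T := fun s hs =>
      ⟨(hτnn (i - 1) (by omega)).trans hs.1.le, hs.2.le.trans (hτle i hiN1)⟩
    have h1 : Tendsto x (nhdsWithin (τ i) (Ioo (τ (i - 1)) (τ i))) (nhds (xlim i)) :=
      (hxlim i hi1 hiN1).mono_left (nhdsWithin_mono _ Ioo_subset_Iio_self)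
    have hΦ : ContinuousOn (fun s => ∫ t in (0:ℝ)..s, f s t (x t) (u t)) (Icc 0 T) :=
      volterra_cont hT hτ0 hτT hτmono haU hu hf hxmeas hMx
    have hτiIcc : τ i ∈ Icc 0 T := ⟨hτnn i hiN1, hτle i hiN1⟩
    have hmono2 : nhdsWithin (τ i) (Ioo (τ (i - 1)) (τ i)) ≤ nhdsWithin (τ i) (Icc 0 T) :=
      nhdsWithin_mono _ (fun s hs => hmemIcc s hs)
    have h2 : Tendsto (fun s => h s + (∫ t in (0:ℝ)..s, f s t (x t) (u t)) +
        ∑ j ∈ Finset.Icc 1 (i - 1), G s (τ j) (xlim j) (a j) (a (j + 1)))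
        (nhdsWithin (τ i) (Ioo (τ (i - 1)) (τ i)))
        (nhds (h (τ i) + (∫ t in (0:ℝ)..(τ i), f (τ i) t (x t) (u t)) +
        ∑ j ∈ Finset.Icc 1 (i - 1), G (τ i) (τ j) (xlim j) (a j) (a (j + 1)))) := by
      refine Tendsto.add (Tendsto.add ?_ ?_) ?_
      · exact (hh (τ i) hτiIcc).mono_left hmono2
      · exact (hΦ (τ i) hτiIcc).mono_left hmono2
      · refine tendsto_finset_sum _ ?_
        intro j hj
        rw [Finset.mem_Icc] at hj
        have hjN1 : j ≤ N + 1 := by omega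
        have hinner : Continuous (fun s : ℝ => (((s, τ j), (xlim j, (a j, a (j + 1)))) :
            (ℝ × ℝ) × EuclideanSpace ℝ (Fin n) × (Fin m → ℝ) × (Fin m → ℝ))) :=
          (continuous_id.prodMk continuous_const).prodMk continuous_const
        have hmemKpt : (((τ i, τ j), (xlim j, (a j, a (j + 1)))) :
            (ℝ × ℝ) × EuclideanSpace ℝ (Fin n) × (Fin m → ℝ) × (Fin m → ℝ)) ∈
            ({st : ℝ × ℝ | 0 ≤ st.2 ∧ st.2 ≤ st.1 ∧ st.1 ≤ T}) ×ˢ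
            ((univ : Set _) ×ˢ (U ×ˢ U)) := by
          refine ⟨⟨hτnn j hjN1, tau_mono hτmono (by omega) hiN1, hτle i hiN1⟩, trivial,
            haU j (by omega) hjN1, haU (j + 1) (by omega) (by omega)⟩
        have hGc : ContinuousWithinAt (fun s => G s (τ j) (xlim j) (a j) (a (j + 1)))
            (Ioo (τ (i - 1)) (τ i)) (τ i) := by
          show ContinuousWithinAt
            ((fun p : (ℝ × ℝ) × EuclideanSpace ℝ (Fin n) × (Fin m → ℝ) × (Fin m → ℝ) =>
              G p.1.1 p.1.2 p.2.1 p.2.2.1 p.2.2.2) ∘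
              (fun s : ℝ => ((s, τ j), (xlim j, (a j, a (j + 1)))))) _ _
          refine ContinuousWithinAt.comp (hG _ hmemKpt) hinner.continuousWithinAt ?_
          intro s hs
          have hjle : τ j ≤ τ (i - 1) := tau_mono hτmono (by omega) (by omega)
          exact ⟨⟨hτnn j hjN1, hjle.trans hs.1.le, hs.2.le.trans (hτle i hiN1)⟩, trivial,
            haU j (by omega) hjN1, haU (j + 1) (by omega) (by omega)⟩
        exact hGc
    have hclosed : x (τ i) = h (τ i) + (∫ t in (0:ℝ)..(τ i), f (τ i) t (x t) (u t)) +
        ∑ j ∈ Finset.Icc 1 (i - 1), G (τ i) (τ j) (xlim j) (a j) (a (j + 1)) := by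
      rw [hxeq (τ i) hτiIcc, filter_eq hτmono hi1 hiN1 hlt le_rfl]
    have h3 : Tendsto x (nhdsWithin (τ i) (Ioo (τ (i - 1)) (τ i))) (nhds (x (τ i))) := by
      rw [hclosed]
      refine h2.congr' ?_
      filter_upwards [self_mem_nhdsWithin] with s hs
      rw [hxeq s (hmemIcc s hs), filter_eq hτmono hi1 hiN1 hs.1 hs.2.le]
    exact tendsto_nhds_unique h1 h3
  -- key estimate
  have hkey : ∀ (k i : ℕ), 1 ≤ i → i ≤ N + 1 → ∀ s : ℝ, τ (i - 1) < s → s ≤ τ i →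
      ‖(h s + (∫ t in (0:ℝ)..s, f s t (ξ k t) (u t)) +
        ∑ j ∈ Finset.Icc 1 (i - 1), G s (τ j) (η k j) (a j) (a (j + 1))) - x s‖
      ≤ Cf' * (∫ t in (0:ℝ)..s, ‖ξ k t - x t‖) +
        CG' * ∑ j ∈ Finset.Icc 1 (i - 1), ‖η k j - xlim j‖ := by
    intro k i hi1 hiN1 s hs1 hs2
    have hs0 : 0 < s := lt_of_le_of_lt (hτnn (i - 1) (by omega)) hs1
    have hsT : s ≤ T := hs2.trans (hτle i hiN1)
    obtain ⟨hkm, Rk, hRk0, hRk⟩ := hξmb k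
    have hRkIoc : ∀ t ∈ Ioc 0 T, ‖ξ k t‖ ≤ Rk := fun t ht => hRk t ⟨ht.1.le, ht.2⟩
    have Ik : IntervalIntegrable (fun t => f s t (ξ k t) (u t)) volume 0 s :=
      integrand_intble hτ0 hτT hτmono haU hu hf hkm hRkIoc hs0.le le_rfl hsT
    have Ix : IntervalIntegrable (fun t => f s t (x t) (u t)) volume 0 s :=
      integrand_intble hτ0 hτT hτmono haU hu hf hxmeas hMx hs0.le le_rfl hsT
    rw [hxeq s ⟨hs0.le, hsT⟩, filter_eq hτmono hi1 hiN1 hs1 hs2]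
    have hvec : (h s + (∫ t in (0:ℝ)..s, f s t (ξ k t) (u t)) +
        ∑ j ∈ Finset.Icc 1 (i - 1), G s (τ j) (η k j) (a j) (a (j + 1))) -
        (h s + (∫ t in (0:ℝ)..s, f s t (x t) (u t)) +
        ∑ j ∈ Finset.Icc 1 (i - 1), G s (τ j) (xlim j) (a j) (a (j + 1)))
        = ((∫ t in (0:ℝ)..s, f s t (ξ k t) (u t)) - (∫ t in (0:ℝ)..s, f s t (x t) (u t))) +
        ((∑ j ∈ Finset.Icc 1 (i - 1), G s (τ j) (η k j) (a j) (a (j + 1))) -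
         (∑ j ∈ Finset.Icc 1 (i - 1), G s (τ j) (xlim j) (a j) (a (j + 1)))) := by
      abel
    rw [hvec]
    refine le_trans (norm_add_le _ _) (add_le_add ?_ ?_)
    · -- integral part
      rw [← intervalIntegral.integral_sub Ik Ix]
      rw [intervalIntegral.integral_of_le hs0.le, intervalIntegral.integral_of_le hs0.le]
      refine le_trans (norm_integral_le_integral_norm _) ?_
      have hInL : IntegrableOn (fun t => ‖f s t (ξ k t) (u t) - f s t (x t) (u t)‖)
          (Ioc 0 s) volume := by
        have := (Ik.sub Ix).norm
        rwa [intervalIntegrable_iff, uIoc_of_le hs0.le] at this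
      have hInR : IntegrableOn (fun t => Cf' * ‖ξ k t - x t‖) (Ioc 0 s) volume := by
        have := intnorm k 0 s le_rfl hsT hs0.le
        rw [intervalIntegrable_iff, uIoc_of_le hs0.le] at this
        exact this.const_mul Cf'
      have hmono3 := integral_mono_ae hInL hInR ?_
      · refine hmono3.trans ?_
        rw [MeasureTheory.integral_const_mul]
      · filter_upwards [ae_restrict_mem measurableSet_Ioc, ae_ne_restrict (Ioc 0 s) T]
          with t ht htT
        have htT' : t < T := lt_of_le_of_ne (ht.2.trans hsT) htT
        obtain ⟨i', hi'1, hi'2, hle, hlt⟩ := exists_cover hτ0 hτT hτmono ht.1.le htT'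
        rw [hu i' hi'1 hi'2 t ⟨hle, hlt⟩]
        refine le_trans (hfLip s t ht.1.le ht.2 hsT (a i') (haU i' hi'1 hi'2) _ _) ?_
        exact mul_le_mul_of_nonneg_right (le_max_left Cf 0) (norm_nonneg _)
    · -- sum part
      rw [← Finset.sum_sub_distrib]
      refine le_trans (norm_sum_le _ _) ?_
      rw [Finset.mul_sum]
      refine Finset.sum_le_sum ?_
      intro j hj
      rw [Finset.mem_Icc] at hj
      have hjle : τ j ≤ τ (i - 1) := tau_mono hτmono hj.2 (by omega)
      refine le_trans (hGLip s (τ j) (hτnn j (by omega)) (hjle.trans hs1.le) hsT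
        (a j) (haU j (by omega) (by omega)) (a (j + 1)) (haU (j + 1) (by omega) (by omega))
        _ _) ?_
      exact mul_le_mul_of_nonneg_right (le_max_left CG 0) (norm_nonneg _)
  -- exponential integral computation
  have hexpint : ∀ c s : ℝ, (∫ t in c..s, Real.exp (lam * (t - c)))
      = (Real.exp (lam * (s - c)) - 1) / lam := by
    intro c s
    rw [intervalIntegral.integral_comp_sub_right (fun y => Real.exp (lam * y)) c]
    rw [intervalIntegral.integral_comp_mul_left (fun y => Real.exp y) (ne_of_gt hlam0)]
    rw [sub_self, mul_zero, integral_exp, Real.exp_zero, smul_eq_mul]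
    field_simp
  -- main induction over the subintervals
  have main : ∀ i : ℕ, i ≤ N + 1 →
      (∀ j, 1 ≤ j → j ≤ i → Tendsto (fun k : ℕ =>
        ⨆ t : Ioo (τ (j - 1)) (τ j), ‖ξ k t - x t‖) atTop (nhds 0)) ∧
      (∀ j, 1 ≤ j → j ≤ i → j ≤ N →
        Tendsto (fun k : ℕ => ‖η k j - xlim j‖) atTop (nhds 0)) := by
    intro i
    induction i with
    | zero => exact fun _ => ⟨fun j hj1 hj0 => by omega, fun j hj1 hj0 _ => by omega⟩
    | succ i ih =>
      intro hi1
      obtain ⟨ihS, ihE⟩ := ih (by omega)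
      have hii : τ i < τ (i + 1) := hτmono i (i + 1) (lt_add_one _) hi1
      have hτi0 : 0 ≤ τ i := hτnn i (by omega)
      have hτi1T : τ (i + 1) ≤ T := hτle (i + 1) hi1
      haveI hne : Nonempty (Ioo (τ i) (τ (i + 1))) := (Set.nonempty_Ioo.2 hii).to_subtype
      set W : ℕ → ℝ := fun k => ⨆ t : Ioo (τ i) (τ (i + 1)),
        Real.exp (-(lam * ((t : ℝ) - τ i))) * ‖ξ k t - x t‖ with hWdef
      have hWbdd : ∀ k, BddAbove (range fun t : Ioo (τ i) (τ (i + 1)) =>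
          Real.exp (-(lam * ((t : ℝ) - τ i))) * ‖ξ k t - x t‖) := by
        intro k
        obtain ⟨R, hR⟩ := hbddS k
        refine ⟨max R 0, ?_⟩
        rintro _ ⟨t, rfl⟩
        have h1 : Real.exp (-(lam * ((t : ℝ) - τ i))) ≤ 1 := by
          rw [Real.exp_le_one_iff]
          nlinarith [t.2.1]
        have h2 : ‖ξ k (t : ℝ) - x (t : ℝ)‖ ≤ max R 0 :=
          (hR (t : ℝ) ⟨hτi0.trans t.2.1.le, t.2.2.le.trans hτi1T⟩).trans (le_max_left _ _)
        calc Real.exp (-(lam * ((t : ℝ) - τ i))) * ‖ξ k (t : ℝ) - x (t : ℝ)‖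
            ≤ 1 * max R 0 := mul_le_mul h1 h2 (norm_nonneg _) zero_le_one
          _ = max R 0 := one_mul _
      have hW0 : ∀ k, 0 ≤ W k := fun k =>
        Real.iSup_nonneg fun t => mul_nonneg (Real.exp_pos _).le (norm_nonneg _)
      have hexid : ∀ b : ℝ, Real.exp (lam * b) * Real.exp (-(lam * b)) = 1 := fun b => by
        rw [← Real.exp_add]; simp
      set eps : ℕ → ℝ := fun k =>
        Cf' * (∑ j ∈ Finset.range i, T * (⨆ t : Ioo (τ j) (τ (j + 1)), ‖ξ k t - x t‖)) +
        CG' * (∑ j ∈ Finset.Icc 1 i, ‖η k j - xlim j‖) with hepsdef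
      have heps0 : ∀ k, 0 ≤ eps k := by
        intro k
        have h1 : 0 ≤ ∑ j ∈ Finset.range i, T * (⨆ t : Ioo (τ j) (τ (j + 1)), ‖ξ k t - x t‖) :=
          Finset.sum_nonneg fun j _ => mul_nonneg hT.le (hSnnX _ _ _)
        have h2 : 0 ≤ ∑ j ∈ Finset.Icc 1 i, ‖η k j - xlim j‖ :=
          Finset.sum_nonneg fun j _ => norm_nonneg _
        exact add_nonneg (mul_nonneg hCf'0 h1) (mul_nonneg hCG'0 h2)
      have hWrec : ∀ k, W (k + 1) ≤ eps k + W k / 2 := by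
        intro k
        refine ciSup_le fun tt => ?_
        obtain ⟨s, hs1, hs2⟩ := tt
        have hb := hkey k (i + 1) (by omega) hi1 s (by simpa using hs1) hs2.le
        simp only [Nat.add_sub_cancel] at hb
        have hsIcc : s ∈ Icc 0 T := ⟨hτi0.trans hs1.le, hs2.le.trans hτi1T⟩
        have hfeq := filter_eq hτmono (i := i + 1) (by omega) hi1 (by simpa using hs1) hs2.le
        simp only [Nat.add_sub_cancel] at hfeq
        have hrec2 : ξ (k + 1) s - x s = (h s + (∫ t in (0:ℝ)..s, f s t (ξ k t) (u t)) +
            ∑ j ∈ Finset.Icc 1 i, G s (τ j) (η k j) (a j) (a (j + 1))) - x s := by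
          rw [hξrec k s hsIcc, hfeq]
        have hIa : IntervalIntegrable (fun t => ‖ξ k t - x t‖) volume 0 (τ i) :=
          intnorm k 0 (τ i) le_rfl (hτle i (by omega)) hτi0
        have hIb : IntervalIntegrable (fun t => ‖ξ k t - x t‖) volume (τ i) s :=
          intnorm k (τ i) s hτi0 (hs2.le.trans hτi1T) hs1.le
        have hsplit : (∫ t in (0:ℝ)..s, ‖ξ k t - x t‖)
            = (∫ t in (0:ℝ)..(τ i), ‖ξ k t - x t‖) + ∫ t in (τ i)..s, ‖ξ k t - x t‖ :=
          (intervalIntegral.integral_add_adjacent_intervals hIa hIb).symm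
        have h8 := hint0 k i (by omega)
        have hweight : (∫ t in (τ i)..s, ‖ξ k t - x t‖)
            ≤ W k * (Real.exp (lam * (s - τ i)) / lam) := by
          have hptw : (∫ t in (τ i)..s, ‖ξ k t - x t‖)
              ≤ ∫ t in (τ i)..s, W k * Real.exp (lam * (t - τ i)) := by
            rw [intervalIntegral.integral_of_le hs1.le, intervalIntegral.integral_of_le hs1.le]
            have hInL : IntegrableOn (fun t => ‖ξ k t - x t‖) (Ioc (τ i) s) volume := by
              have := hIb; rwa [intervalIntegrable_iff, uIoc_of_le hs1.le] at this
            have hInR : IntegrableOn (fun t => W k * Real.exp (lam * (t - τ i)))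
                (Ioc (τ i) s) volume :=
              Continuous.integrableOn_Ioc
                (continuous_const.mul (Real.continuous_exp.comp
                  (continuous_const.mul (continuous_id.sub continuous_const))))
            refine integral_mono_ae hInL hInR ?_
            filter_upwards [ae_restrict_mem measurableSet_Ioc] with t ht
            have htIoo : t ∈ Ioo (τ i) (τ (i + 1)) := ⟨ht.1, lt_of_le_of_lt ht.2 hs2⟩
            have hle1 : Real.exp (-(lam * (t - τ i))) * ‖ξ k t - x t‖ ≤ W k :=
              le_ciSup (hWbdd k) (⟨t, htIoo⟩ : Ioo (τ i) (τ (i + 1)))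
            calc ‖ξ k t - x t‖ = Real.exp (lam * (t - τ i)) *
                  (Real.exp (-(lam * (t - τ i))) * ‖ξ k t - x t‖) := by
                  rw [← mul_assoc, hexid, one_mul]
              _ ≤ Real.exp (lam * (t - τ i)) * W k :=
                  mul_le_mul_of_nonneg_left hle1 (Real.exp_pos _).le
              _ = W k * Real.exp (lam * (t - τ i)) := mul_comm _ _
          refine hptw.trans ?_
          rw [intervalIntegral.integral_const_mul, hexpint (τ i) s]
          have hquot : (Real.exp (lam * (s - τ i)) - 1) / lam
              ≤ Real.exp (lam * (s - τ i)) / lam := by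
            gcongr
            linarith
          exact mul_le_mul_of_nonneg_left hquot (hW0 k)
        have hnorm : ‖ξ (k + 1) s - x s‖
            ≤ eps k + Cf' * (W k * (Real.exp (lam * (s - τ i)) / lam)) := by
          rw [hrec2]
          refine hb.trans ?_
          have h1 : (∫ t in (0:ℝ)..s, ‖ξ k t - x t‖)
              ≤ (∑ j ∈ Finset.range i, T * (⨆ t : Ioo (τ j) (τ (j + 1)), ‖ξ k t - x t‖))
                + W k * (Real.exp (lam * (s - τ i)) / lam) := by
            rw [hsplit]; exact add_le_add h8 hweight
          have h2 := mul_le_mul_of_nonneg_left h1 hCf'0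
          rw [mul_add] at h2
          simp only [hepsdef]
          linarith
        show Real.exp (-(lam * (s - τ i))) * ‖ξ (k + 1) s - x s‖ ≤ eps k + W k / 2
        rw [Real.exp_neg]
        set Ea := Real.exp (lam * (s - τ i)) with hEadef
        have hEa0 : 0 < Ea := Real.exp_pos _
        have hEa1 : 1 ≤ Ea := by
          rw [hEadef]
          have hx0 : 0 ≤ lam * (s - τ i) := by nlinarith [hs1.le]
          linarith [Real.add_one_le_exp (lam * (s - τ i))]
        have hstep := mul_le_mul_of_nonneg_left hnorm (inv_nonneg.2 hEa0.le)
        refine hstep.trans ?_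
        have hcalc : Ea⁻¹ * (eps k + Cf' * (W k * (Ea / lam)))
            = Ea⁻¹ * eps k + Cf' * W k / lam := by
          field_simp
        rw [hcalc]
        have e1 : Ea⁻¹ * eps k ≤ eps k := by
          have hEi : Ea⁻¹ ≤ 1 := by
            rw [← one_div]
            exact div_le_one_of_le₀ hEa1 hEa0.le
          calc Ea⁻¹ * eps k ≤ 1 * eps k := mul_le_mul_of_nonneg_right hEi (heps0 k)
            _ = eps k := one_mul _
        have e2 : Cf' * W k / lam ≤ W k / 2 := by
          rw [div_le_div_iff₀ hlam0 (by norm_num : (0:ℝ) < 2)]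
          nlinarith [hW0 k]
        linarith
      have hepsT : Tendsto eps atTop (nhds 0) := by
        have h1 : Tendsto (fun k => ∑ j ∈ Finset.range i,
            T * (⨆ t : Ioo (τ j) (τ (j + 1)), ‖ξ k t - x t‖)) atTop (nhds 0) := by
          have hterm : ∀ j ∈ Finset.range i, Tendsto
              (fun k => T * (⨆ t : Ioo (τ j) (τ (j + 1)), ‖ξ k t - x t‖)) atTop (nhds 0) := by
            intro j hj
            rw [Finset.mem_range] at hj
            have := (ihS (j + 1) (by omega) (by omega)).const_mul T
            simpa using this
          have := tendsto_finset_sum (Finset.range i) hterm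
          simpa using this
        have h2 : Tendsto (fun k => ∑ j ∈ Finset.Icc 1 i, ‖η k j - xlim j‖) atTop (nhds 0) := by
          have hterm : ∀ j ∈ Finset.Icc 1 i, Tendsto
              (fun k => ‖η k j - xlim j‖) atTop (nhds 0) := by
            intro j hj
            rw [Finset.mem_Icc] at hj
            exact ihE j hj.1 hj.2 (by omega)
          have := tendsto_finset_sum (Finset.Icc 1 i) hterm
          simpa using this
        have := (h1.const_mul Cf').add (h2.const_mul CG')
        simpa using this
      have hWtend : Tendsto W atTop (nhds 0) := tendsto_half W eps hW0 hWrec hepsT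
      have hSleW : ∀ k, (⨆ t : Ioo (τ i) (τ (i + 1)), ‖ξ k t - x t‖)
          ≤ Real.exp (lam * T) * W k := by
        intro k
        refine ciSup_le fun t => ?_
        have hval : Real.exp (-(lam * ((t : ℝ) - τ i))) * ‖ξ k t - x t‖ ≤ W k :=
          le_ciSup (hWbdd k) t
        have hexp2 : Real.exp (lam * ((t : ℝ) - τ i)) ≤ Real.exp (lam * T) := by
          apply Real.exp_le_exp.2
          nlinarith [t.2.1, t.2.2]
        calc ‖ξ k (t : ℝ) - x (t : ℝ)‖
            = Real.exp (lam * ((t : ℝ) - τ i)) *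
              (Real.exp (-(lam * ((t : ℝ) - τ i))) * ‖ξ k (t : ℝ) - x (t : ℝ)‖) := by
              rw [← mul_assoc, hexid, one_mul]
          _ ≤ Real.exp (lam * T) * W k :=
              mul_le_mul hexp2 hval (mul_nonneg (Real.exp_pos _).le (norm_nonneg _))
                (Real.exp_pos _).le
      have hStend : Tendsto (fun k => ⨆ t : Ioo (τ i) (τ (i + 1)), ‖ξ k t - x t‖)
          atTop (nhds 0) := by
        refine squeeze_zero (fun k => hSnnX _ _ _) hSleW ?_
        have := hWtend.const_mul (Real.exp (lam * T))
        simpa using this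
      have hEtend : i + 1 ≤ N → Tendsto (fun k => ‖η k (i + 1) - xlim (i + 1)‖)
          atTop (nhds 0) := by
        intro hiN
        have hlim1 : xlim (i + 1) = x (τ (i + 1)) := hxlimeq (i + 1) (by omega) hiN
        set eps2 : ℕ → ℝ := fun k =>
          Cf' * (∑ j ∈ Finset.range (i + 1), T * (⨆ t : Ioo (τ j) (τ (j + 1)), ‖ξ k t - x t‖)) +
          CG' * (∑ j ∈ Finset.Icc 1 i, ‖η k j - xlim j‖) with heps2def
        have hbound : ∀ k, ‖η (k + 1) (i + 1) - xlim (i + 1)‖ ≤ eps2 k := by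
          intro k
          have hrec3 := hηrec k (i + 1) (by omega) hiN
          simp only [Nat.add_sub_cancel] at hrec3
          have hb := hkey k (i + 1) (by omega) hi1 (τ (i + 1)) (by simpa using hii) le_rfl
          simp only [Nat.add_sub_cancel] at hb
          rw [hrec3, hlim1]
          refine hb.trans ?_
          have h8 := hint0 k (i + 1) hi1
          have h9 := mul_le_mul_of_nonneg_left h8 hCf'0
          simp only [heps2def]
          linarith
        have heps2T : Tendsto eps2 atTop (nhds 0) := by
          have h1 : Tendsto (fun k => ∑ j ∈ Finset.range (i + 1),
              T * (⨆ t : Ioo (τ j) (τ (j + 1)), ‖ξ k t - x t‖)) atTop (nhds 0) := by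
            have hterm : ∀ j ∈ Finset.range (i + 1), Tendsto
                (fun k => T * (⨆ t : Ioo (τ j) (τ (j + 1)), ‖ξ k t - x t‖)) atTop (nhds 0) := by
              intro j hj
              rw [Finset.mem_range] at hj
              rcases Nat.lt_succ_iff_lt_or_eq.1 hj with hj' | rfl
              · have := (ihS (j + 1) (by omega) (by omega)).const_mul T
                simpa using this
              · have := hStend.const_mul T
                simpa using this
            have := tendsto_finset_sum (Finset.range (i + 1)) hterm
            simpa using this
          have h2 : Tendsto (fun k => ∑ j ∈ Finset.Icc 1 i, ‖η k j - xlim j‖)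
              atTop (nhds 0) := by
            have hterm : ∀ j ∈ Finset.Icc 1 i, Tendsto
                (fun k => ‖η k j - xlim j‖) atTop (nhds 0) := by
              intro j hj
              rw [Finset.mem_Icc] at hj
              exact ihE j hj.1 hj.2 (by omega)
            have := tendsto_finset_sum (Finset.Icc 1 i) hterm
            simpa using this
          have := (h1.const_mul Cf').add (h2.const_mul CG')
          simpa using this
        have hshift : Tendsto (fun k => ‖η (k + 1) (i + 1) - xlim (i + 1)‖) atTop (nhds 0) :=
          squeeze_zero (fun k => norm_nonneg _) hbound heps2T
        exact (tendsto_add_atTop_iff_nat 1).1 hshift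
      refine ⟨?_, ?_⟩
      · intro j hj1 hj2
        rcases eq_or_lt_of_le hj2 with rfl | hlt
        · exact hStend
        · exact ihS j hj1 (by omega)
      · intro j hj1 hj2 hjN
        rcases eq_or_lt_of_le hj2 with rfl | hlt
        · exact hEtend hjN
        · exact ihE j hj1 (by omega) hjN
  constructor
  · intro i hi1 hi2
    exact (main (N + 1) le_rfl).1 i hi1 hi2
  · intro i hi1 hi2
    rw [tendsto_iff_norm_sub_tendsto_zero]
    exact (main (N + 1) le_rfl).2 i hi1 (by omega) hi2
end

section
/- Let T > 0 and let K : ℝ → ℝ → Matrix (Fin n) (Fin n) ℝ be measurable with ‖K(s,t)‖ ≤ M for all 0 ≤ t ≤ s ≤ T, and let K^{*m} denote the iterated kernels with respect to the convolution (K₁ * K₂)(s,t) := ∫_t^s K₁(s,r)·K₂(r,t) dr. Then for each 0 ≤ t ≤ s ≤ T the series R(s,t) := ∑_{m=1}^∞ K^{*m}(s,t) converges absolutely with ‖R(s,t)‖ ≤ M e^{M(s−t)}, and for every continuous h : [0,T] → ℝⁿ the function x(s) := h(s) + ∫₀^s R(s,t)·h(t) dt satisfies the linear Volterra equation x(s)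 = h(s) + ∫₀^s K(s,t)·x(t) dt for all s ∈ [0,T]. -/
open scoped Matrix
open Set
open MeasureTheory
set_option maxHeartbeats 1000000

attribute [local instance] Matrix.linftyOpNormedAddCommGroup Matrix.linftyOpNormedSpace

noncomputable instance matContinuousENorm {n : ℕ} : ContinuousENorm (Matrix (Fin n) (Fin n) ℝ) :=
  SeminormedAddGroup.toContinuousENorm

noncomputable instance matPM {n : ℕ} :
    @TopologicalSpace.PseudoMetrizableSpace (Matrix (Fin n) (Fin n) ℝ) instTopologicalSpaceMatrix :=
  inferInstanceAs (TopologicalSpace.PseudoMetrizableSpace (Fin n → Fin n → ℝ))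

/-- The convolution `(K₁ * K₂)(s,t) = ∫_t^s K₁(s,r)·K₂(r,t) dr` of two matrix kernels. -/
noncomputable def kernelConv {n : ℕ} (K₁ K₂ : ℝ → ℝ → Matrix (Fin n) (Fin n) ℝ) :
    ℝ → ℝ → Matrix (Fin n) (Fin n) ℝ :=
  fun s t => ∫ r in t..s, K₁ s r * K₂ r t

/-- The iterated kernels: `iterKernel K m = K^{*(m+1)}`, i.e. `iterKernel K 0 = K` and
`iterKernel K (m+1) = K * (iterKernel K m)`. -/
noncomputable def iterKernel {n : ℕ} (K : ℝ → ℝ → Matrix (Fin n) (Fin n) ℝ) :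
    ℕ → ℝ → ℝ → Matrix (Fin n) (Fin n) ℝ
  | 0 => K
  | m + 1 => kernelConv K (iterKernel K m)

/-- The resolvent kernel `R(s,t) = ∑_{m=1}^∞ K^{*m}(s,t)`. -/
noncomputable def resolventKernel {n : ℕ} (K : ℝ → ℝ → Matrix (Fin n) (Fin n) ℝ)
    (s t : ℝ) : Matrix (Fin n) (Fin n) ℝ :=
  ∑' m : ℕ, iterKernel K m s t

section
namespace VoltAux

variable {n : ℕ}

local notation "Mat" => Matrix (Fin n) (Fin n) ℝ

/-- strongly measurable from measurable entries -/
lemma sm_of_entries {α : Type*} [MeasurableSpace α] {f : α → Mat}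
    (hf : ∀ i j, Measurable fun a => f a i j) : StronglyMeasurable f := by
  have hrepr : f = fun a => ∑ i : Fin n, ∑ j : Fin n,
      f a i j • Matrix.single i j (1 : ℝ) := by
    funext a
    conv_lhs => rw [Matrix.matrix_eq_sum_single (f a)]
    simp [Matrix.smul_single]
  rw [hrepr]
  refine Finset.stronglyMeasurable_fun_sum _ fun i _ => ?_
  refine Finset.stronglyMeasurable_fun_sum _ fun j _ => ?_
  exact ((hf i j).stronglyMeasurable).smul_const _

/-- the bilinear `mulVec` as a continuous map -/
lemma continuous_mulVec : Continuous (fun p : Mat × (Fin n → ℝ) => p.1.mulVec p.2) := by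
  let L : Mat →ₗ[ℝ] (Fin n → ℝ) →ₗ[ℝ] (Fin n → ℝ) :=
    LinearMap.mk₂ ℝ (fun A v => A.mulVec v)
      (fun A B v => Matrix.add_mulVec A B v)
      (fun c A v => Matrix.smul_mulVec c A v)
      (fun A u v => Matrix.mulVec_add A u v)
      (fun c A v => Matrix.mulVec_smul A c v)
  have hL : ∀ A v, ‖L A v‖ ≤ 1 * ‖A‖ * ‖v‖ := by
    intro A v
    simpa [L] using Matrix.linfty_opNorm_mulVec A v
  exact ((LinearMap.mkContinuous₂ L 1 hL).isBoundedBilinearMap).continuous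

/-- matrix multiplication is continuous (for the linfty operator norm). -/
lemma continuous_matmul : Continuous (fun p : Mat × Mat => p.1 * p.2) := by
  let L : Mat →ₗ[ℝ] Mat →ₗ[ℝ] Mat :=
    LinearMap.mk₂ ℝ (fun A B => A * B)
      (fun A B C => Matrix.add_mul A B C)
      (fun c A B => Matrix.smul_mul c A B)
      (fun A B C => Matrix.mul_add A B C)
      (fun c A B => Matrix.mul_smul A c B)
  have hL : ∀ A B, ‖L A B‖ ≤ 1 * ‖A‖ * ‖B‖ := by
    intro A B
    simpa [L] using Matrix.linfty_opNorm_mul A B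
  exact ((LinearMap.mkContinuous₂ L 1 hL).isBoundedBilinearMap).continuous

lemma sm_mul {α : Type*} [MeasurableSpace α] {f g : α → Mat}
    (hf : StronglyMeasurable f) (hg : StronglyMeasurable g) :
    StronglyMeasurable (fun a => f a * g a) :=
  continuous_matmul.comp_stronglyMeasurable (hf.prodMk hg)

lemma intervalIntegral_eq (f : ℝ → Mat) (a b : ℝ) :
    (∫ r in a..b, f r) = (∫ r in Ioc a b, f r) - ∫ r in Ioc b a, f r := rfl

/-- strong measurability of the convolution -/
lemma conv_sm {K₁ K₂ : ℝ → ℝ → Mat}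
    (h₁ : StronglyMeasurable (fun p : ℝ × ℝ => K₁ p.1 p.2))
    (h₂ : StronglyMeasurable (fun p : ℝ × ℝ => K₂ p.1 p.2)) :
    StronglyMeasurable (fun p : ℝ × ℝ => kernelConv K₁ K₂ p.1 p.2) := by
  have hF : StronglyMeasurable (fun q : (ℝ × ℝ) × ℝ => K₁ q.1.1 q.2 * K₂ q.2 q.1.2) := by
    have e₁ : StronglyMeasurable fun q : (ℝ × ℝ) × ℝ => K₁ q.1.1 q.2 :=
      h₁.comp_measurable (measurable_fst.fst.prodMk measurable_snd)
    have e₂ : StronglyMeasurable fun q : (ℝ × ℝ) × ℝ => K₂ q.2 q.1.2 :=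
      h₂.comp_measurable (measurable_snd.prodMk measurable_fst.snd)
    exact sm_mul e₁ e₂
  have hS : ∀ u : Bool, MeasurableSet {q : (ℝ × ℝ) × ℝ |
      q.2 ∈ Ioc (cond u q.1.2 q.1.1) (cond u q.1.1 q.1.2)} := by
    intro u
    cases u <;>
    · simp only [Set.mem_Ioc, Bool.cond_false, Bool.cond_true, Set.setOf_and]
      refine (measurableSet_lt ?_ ?_).inter
        (measurableSet_le ?_ ?_) <;> fun_prop
  have key : ∀ u : Bool, StronglyMeasurable fun p : ℝ × ℝ =>
      ∫ r in Ioc (cond u p.2 p.1) (cond u p.1 p.2), K₁ p.1 r * K₂ r p.2 := by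
    intro u
    have : (fun p : ℝ × ℝ => ∫ r in Ioc (cond u p.2 p.1) (cond u p.1 p.2), K₁ p.1 r * K₂ r p.2)
        = fun p : ℝ × ℝ => ∫ r, ({q : (ℝ × ℝ) × ℝ |
            q.2 ∈ Ioc (cond u q.1.2 q.1.1) (cond u q.1.1 q.1.2)}.indicator
            (fun q => K₁ q.1.1 q.2 * K₂ q.2 q.1.2)) (p, r) := by
      funext p
      rw [← integral_indicator (by exact measurable_prodMk_left (hS u))]
      congr 1
    rw [this]
    exact (hF.indicator (hS u)).integral_prod_right'
  have : (fun p : ℝ × ℝ => kernelConv K₁ K₂ p.1 p.2)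
      = fun p => (∫ r in Ioc p.2 p.1, K₁ p.1 r * K₂ r p.2)
          - ∫ r in Ioc p.1 p.2, K₁ p.1 r * K₂ r p.2 := by
    funext p; exact intervalIntegral_eq _ _ _
  rw [this]
  exact (key true).sub (key false)

lemma iter_sm {K : ℝ → ℝ → Mat}
    (hK : StronglyMeasurable (fun p : ℝ × ℝ => K p.1 p.2)) (m : ℕ) :
    StronglyMeasurable (fun p : ℝ × ℝ => iterKernel K m p.1 p.2) := by
  induction m with
  | zero => exact hK
  | succ m ih => exact conv_sm hK ih

variable {K : ℝ → ℝ → Matrix (Fin n) (Fin n) ℝ} {T M : ℝ}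

lemma iter_bound (hb : ∀ s t : ℝ, 0 ≤ t → t ≤ s → s ≤ T → ‖K s t‖ ≤ M) :
    ∀ (m : ℕ) (s t : ℝ), 0 ≤ t → t ≤ s → s ≤ T →
      ‖iterKernel K m s t‖ ≤ M ^ (m + 1) * (s - t) ^ m / m.factorial := by
  intro m
  induction m with
  | zero => intro s t ht hts hsT; simpa [iterKernel] using hb s t ht hts hsT
  | succ m ih =>
    intro s t ht hts hsT
    have hM : 0 ≤ M := le_trans (norm_nonneg _) (hb t t ht le_rfl (le_trans hts hsT))
    set g : ℝ → ℝ := fun r => M ^ (m + 2) * (r - t) ^ m / m.factorial with hg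
    have hgc : Continuous g := by fun_prop
    have hgi : IntervalIntegrable g MeasureTheory.volume t s := hgc.intervalIntegrable t s
    have hle : ∀ᵐ r ∂(MeasureTheory.volume.restrict (Set.uIoc t s)),
        ‖K s r * iterKernel K m r t‖ ≤ g r := by
      refine MeasureTheory.ae_restrict_of_forall_mem measurableSet_uIoc ?_
      intro r hr
      rw [Set.uIoc_of_le hts] at hr
      have h1 : ‖K s r * iterKernel K m r t‖ ≤ ‖K s r‖ * ‖iterKernel K m r t‖ :=
        Matrix.linfty_opNorm_mul _ _
      have h2 : ‖K s r‖ ≤ M := hb s r (le_trans ht hr.1.le) hr.2 hsT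
      have h3 : ‖iterKernel K m r t‖ ≤ M ^ (m + 1) * (r - t) ^ m / m.factorial :=
        ih r t ht hr.1.le (le_trans hr.2 hsT)
      calc ‖K s r * iterKernel K m r t‖ ≤ ‖K s r‖ * ‖iterKernel K m r t‖ := h1
        _ ≤ M * (M ^ (m + 1) * (r - t) ^ m / m.factorial) := by
            apply mul_le_mul h2 h3 (norm_nonneg _) hM
        _ = g r := by simp only [hg]; ring
    have key : ‖iterKernel K (m + 1) s t‖ ≤ |∫ r in t..s, g r| :=
      intervalIntegral.norm_integral_le_abs_of_norm_le hle hgi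
    have hgnn : ∀ r ∈ Set.Icc t s, 0 ≤ g r := by
      intro r hr
      have : (0:ℝ) ≤ (r - t) ^ m := pow_nonneg (by linarith [hr.1]) m
      positivity
    have habs : |∫ r in t..s, g r| = ∫ r in t..s, g r := by
      rw [abs_of_nonneg]
      exact intervalIntegral.integral_nonneg hts fun u hu => hgnn u hu
    have hcomp : (∫ r in t..s, g r)
        = M ^ (m + 2) * (s - t) ^ (m + 1) / (m + 1).factorial := by
      have h1 : (∫ r in t..s, g r)
          = (M ^ (m + 2) / m.factorial) * ∫ r in t..s, (r - t) ^ m := by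
        rw [← intervalIntegral.integral_const_mul]
        congr 1; funext r; rw [hg]; ring
      have h2 : (∫ r in t..s, (r - t) ^ m) = (s - t) ^ (m + 1) / (m + 1) := by
        rw [intervalIntegral.integral_comp_sub_right (fun u => u ^ m) t, sub_self,
          integral_pow]
        simp
      rw [h1, h2, Nat.factorial_succ]
      have hf0 : (m.factorial : ℝ) ≠ 0 := Nat.cast_ne_zero.2 m.factorial_ne_zero
      have hm0 : (m : ℝ) + 1 ≠ 0 := by positivity
      push_cast
      rw [div_mul_div_comm, mul_comm (m.factorial : ℝ) ((m : ℝ) + 1)]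
    calc ‖iterKernel K (m + 1) s t‖ ≤ |∫ r in t..s, g r| := key
      _ = _ := by rw [habs, hcomp]

lemma summable_bound (M x : ℝ) :
    Summable (fun m : ℕ => M ^ (m + 1) * x ^ m / m.factorial) ∧
    ∑' m : ℕ, M ^ (m + 1) * x ^ m / m.factorial = M * Real.exp (M * x) := by
  have he : (fun m : ℕ => M ^ (m + 1) * x ^ m / m.factorial)
      = fun m : ℕ => M * ((M * x) ^ m / m.factorial) := by
    funext m; rw [mul_pow]; ring
  constructor
  · rw [he]; exact (Real.summable_pow_div_factorial (M * x)).mul_left M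
  · rw [he, tsum_mul_left]
    congr 1
    rw [Real.exp_eq_exp_ℝ, NormedSpace.exp_eq_tsum_div]

lemma norm_summable (hb : ∀ s t : ℝ, 0 ≤ t → t ≤ s → s ≤ T → ‖K s t‖ ≤ M)
    {s t : ℝ} (ht : 0 ≤ t) (hts : t ≤ s) (hsT : s ≤ T) :
    Summable (fun m : ℕ => ‖iterKernel K m s t‖) :=
  Summable.of_nonneg_of_le (fun _ => norm_nonneg _)
    (fun m => iter_bound hb m s t ht hts hsT) (summable_bound M (s - t)).1

lemma mat_summable (hb : ∀ s t : ℝ, 0 ≤ t → t ≤ s → s ≤ T → ‖K s t‖ ≤ M)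
    {s t : ℝ} (ht : 0 ≤ t) (hts : t ≤ s) (hsT : s ≤ T) :
    Summable (fun m : ℕ => iterKernel K m s t) :=
  (norm_summable hb ht hts hsT).of_norm

lemma resolvent_norm_le (hb : ∀ s t : ℝ, 0 ≤ t → t ≤ s → s ≤ T → ‖K s t‖ ≤ M)
    {s t : ℝ} (ht : 0 ≤ t) (hts : t ≤ s) (hsT : s ≤ T) :
    ‖resolventKernel K s t‖ ≤ M * Real.exp (M * (s - t)) := by
  rw [resolventKernel, ← (summable_bound M (s - t)).2]
  calc ‖∑' m : ℕ, iterKernel K m s t‖ ≤ ∑' m : ℕ, ‖iterKernel K m s t‖ :=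
        norm_tsum_le_tsum_norm (norm_summable hb ht hts hsT)
    _ ≤ _ := Summable.tsum_le_tsum (fun m => iter_bound hb m s t ht hts hsT)
        (norm_summable hb ht hts hsT) (summable_bound M (s - t)).1

/-- `A ↦ A * v` as a continuous linear map, for pulling `mulVec` through integrals/sums. -/
noncomputable def mulVecCLM (v : Fin n → ℝ) :
    (Matrix (Fin n) (Fin n) ℝ) →L[ℝ] (Fin n → ℝ) :=
  LinearMap.mkContinuous
    { toFun := fun A => A.mulVec v
      map_add' := fun A B => Matrix.add_mulVec A B v
      map_smul' := fun c A => Matrix.smul_mulVec c A v }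
    ‖v‖ (fun A => by
      rw [mul_comm]
      exact Matrix.linfty_opNorm_mulVec A v)

@[simp] lemma mulVecCLM_apply (v : Fin n → ℝ) (A : Matrix (Fin n) (Fin n) ℝ) :
    mulVecCLM v A = A.mulVec v := rfl

/-- `B ↦ A * B` as a continuous linear map. -/
noncomputable def mulLeftCLM (A : Matrix (Fin n) (Fin n) ℝ) :
    (Matrix (Fin n) (Fin n) ℝ) →L[ℝ] (Matrix (Fin n) (Fin n) ℝ) :=
  LinearMap.mkContinuous
    { toFun := fun B => A * B
      map_add' := fun B C => Matrix.mul_add A B C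
      map_smul' := fun c B => (Matrix.mul_smul A c B) }
    ‖A‖ (fun B => Matrix.linfty_opNorm_mul A B)

@[simp] lemma mulLeftCLM_apply (A B : Matrix (Fin n) (Fin n) ℝ) :
    mulLeftCLM A B = A * B := rfl

lemma integrableOn_K_iter (hK : StronglyMeasurable (fun p : ℝ × ℝ => K p.1 p.2))
    (hb : ∀ s t : ℝ, 0 ≤ t → t ≤ s → s ≤ T → ‖K s t‖ ≤ M) (m : ℕ)
    {s t : ℝ} (ht : 0 ≤ t) (hts : t ≤ s) (hsT : s ≤ T) :
    MeasureTheory.IntegrableOn (fun r => K s r * iterKernel K m r t)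
      (Set.Ioc t s) MeasureTheory.volume := by
  have hM : 0 ≤ M := le_trans (norm_nonneg _) (hb t t ht le_rfl (le_trans hts hsT))
  have hsm : MeasureTheory.AEStronglyMeasurable (fun r => K s r * iterKernel K m r t)
      (MeasureTheory.volume.restrict (Set.Ioc t s)) := by
    have h1 : StronglyMeasurable fun r : ℝ => K s r :=
      hK.comp_measurable (measurable_const.prodMk measurable_id)
    have h2 : StronglyMeasurable fun r : ℝ => iterKernel K m r t :=
      (iter_sm hK m).comp_measurable (measurable_id.prodMk measurable_const)
    exact (sm_mul h1 h2).aestronglyMeasurable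
  refine MeasureTheory.Integrable.mono'
    (MeasureTheory.integrable_const (M * (M ^ (m + 1) * T ^ m / m.factorial))) hsm ?_
  refine MeasureTheory.ae_restrict_of_forall_mem measurableSet_Ioc ?_
  intro r hr
  have hr1 : t ≤ r := hr.1.le
  have hrT : r ≤ T := le_trans hr.2 hsT
  have h1 : ‖K s r * iterKernel K m r t‖ ≤ ‖K s r‖ * ‖iterKernel K m r t‖ :=
    Matrix.linfty_opNorm_mul _ _
  have h2 : ‖K s r‖ ≤ M := hb s r (le_trans ht hr1) hr.2 hsT
  have h3 : ‖iterKernel K m r t‖ ≤ M ^ (m + 1) * (r - t) ^ m / m.factorial :=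
    iter_bound hb m r t ht hr1 hrT
  have h4 : M ^ (m + 1) * (r - t) ^ m / m.factorial
      ≤ M ^ (m + 1) * T ^ m / m.factorial := by
    have hp : (r - t) ^ m ≤ T ^ m := pow_le_pow_left₀ (by linarith) (by linarith) m
    have hA : (0:ℝ) ≤ M ^ (m + 1) := pow_nonneg hM _
    have hc : (0:ℝ) ≤ (m.factorial : ℝ) := by positivity
    exact div_le_div_of_nonneg_right (mul_le_mul_of_nonneg_left hp hA) hc
  calc ‖K s r * iterKernel K m r t‖ ≤ ‖K s r‖ * ‖iterKernel K m r t‖ := h1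
    _ ≤ M * (M ^ (m + 1) * T ^ m / m.factorial) :=
        mul_le_mul h2 (le_trans h3 h4) (norm_nonneg _) hM

lemma resolvent_eq (hK : StronglyMeasurable (fun p : ℝ × ℝ => K p.1 p.2))
    (hb : ∀ s t : ℝ, 0 ≤ t → t ≤ s → s ≤ T → ‖K s t‖ ≤ M)
    {s t : ℝ} (ht : 0 ≤ t) (hts : t ≤ s) (hsT : s ≤ T) :
    resolventKernel K s t = K s t + ∫ r in Set.Ioc t s, K s r * resolventKernel K r t := by
  have hM : 0 ≤ M := le_trans (norm_nonneg _) (hb t t ht le_rfl (le_trans hts hsT))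
  have h0 : resolventKernel K s t
      = iterKernel K 0 s t + ∑' m : ℕ, iterKernel K (m + 1) s t :=
    Summable.tsum_eq_zero_add (mat_summable hb ht hts hsT)
  rw [h0]
  congr 1
  have hswap : ∑' m : ℕ, iterKernel K (m + 1) s t
      = ∫ r in Set.Ioc t s, ∑' m : ℕ, K s r * iterKernel K m r t := by
    have hrw : (fun m : ℕ => iterKernel K (m + 1) s t)
        = fun m : ℕ => ∫ r in Set.Ioc t s, K s r * iterKernel K m r t := by
      funext m
      show kernelConv K (iterKernel K m) s t = _
      rw [kernelConv, intervalIntegral.integral_of_le hts]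
    rw [hrw]
    refine MeasureTheory.integral_tsum_of_summable_integral_norm
      (fun m => integrableOn_K_iter hK hb m ht hts hsT) ?_
    refine Summable.of_nonneg_of_le
      (fun m => MeasureTheory.integral_nonneg fun r => norm_nonneg _)
      (fun m => ?_)
      ((summable_bound M T).1.mul_left (T * M))
    -- bound each integral of the norm
    have hle : ∀ r ∈ Set.Ioc t s,
        ‖K s r * iterKernel K m r t‖ ≤ M * (M ^ (m + 1) * T ^ m / m.factorial) := by
      intro r hr
      have h1 : ‖K s r * iterKernel K m r t‖ ≤ ‖K s r‖ * ‖iterKernel K m r t‖ :=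
        Matrix.linfty_opNorm_mul _ _
      have h2 : ‖K s r‖ ≤ M := hb s r (le_trans ht hr.1.le) hr.2 hsT
      have h3 : ‖iterKernel K m r t‖ ≤ M ^ (m + 1) * (r - t) ^ m / m.factorial :=
        iter_bound hb m r t ht hr.1.le (le_trans hr.2 hsT)
      have h4 : M ^ (m + 1) * (r - t) ^ m / m.factorial
          ≤ M ^ (m + 1) * T ^ m / m.factorial := by
        have hp : (r - t) ^ m ≤ T ^ m :=
          pow_le_pow_left₀ (by linarith [hr.1]) (by linarith [hr.2]) m
        have hA : (0:ℝ) ≤ M ^ (m + 1) := pow_nonneg hM _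
        have hc : (0:ℝ) ≤ (m.factorial : ℝ) := by positivity
        exact div_le_div_of_nonneg_right (mul_le_mul_of_nonneg_left hp hA) hc
      exact le_trans h1 (mul_le_mul h2 (le_trans h3 h4) (norm_nonneg _) hM)
    calc (∫ r in Set.Ioc t s, ‖K s r * iterKernel K m r t‖)
        ≤ ∫ _r in Set.Ioc t s, M * (M ^ (m + 1) * T ^ m / m.factorial) := by
          refine MeasureTheory.setIntegral_mono_on
            (integrableOn_K_iter hK hb m ht hts hsT).norm
            (MeasureTheory.integrableOn_const (by
              rw [Real.volume_Ioc]; exact ENNReal.ofReal_ne_top))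
            measurableSet_Ioc hle
      _ = (MeasureTheory.volume (Set.Ioc t s)).toReal
            * (M * (M ^ (m + 1) * T ^ m / m.factorial)) := by
          rw [MeasureTheory.setIntegral_const, smul_eq_mul, MeasureTheory.measureReal_def]
      _ ≤ T * M * (M ^ (m + 1) * T ^ m / m.factorial) := by
          rw [Real.volume_Ioc, ENNReal.toReal_ofReal (by linarith)]
          have hst : s - t ≤ T := by linarith
          have hnn : (0:ℝ) ≤ M ^ (m + 1) * T ^ m / m.factorial := by
            have hT0 : (0:ℝ) ≤ T := le_trans ht (le_trans hts hsT)
            positivity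
          calc (s - t) * (M * (M ^ (m + 1) * T ^ m / m.factorial))
              ≤ T * (M * (M ^ (m + 1) * T ^ m / m.factorial)) := by
                apply mul_le_mul_of_nonneg_right hst
                exact mul_nonneg hM hnn
            _ = T * M * (M ^ (m + 1) * T ^ m / m.factorial) := by ring
  rw [hswap]
  refine MeasureTheory.setIntegral_congr_fun measurableSet_Ioc ?_
  intro r hr
  have hsum : Summable fun m : ℕ => iterKernel K m r t :=
    mat_summable hb ht hr.1.le (le_trans hr.2 hsT)
  calc ∑' m : ℕ, K s r * iterKernel K m r t
      = ∑' m : ℕ, mulLeftCLM (K s r) (iterKernel K m r t) := by rfl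
    _ = mulLeftCLM (K s r) (∑' m : ℕ, iterKernel K m r t) :=
        ((mulLeftCLM (K s r)).map_tsum hsum).symm
    _ = K s r * resolventKernel K r t := rfl

/-- `v ↦ A *ᵥ v` as a continuous linear map. -/
noncomputable def mulVecLCLM (A : Matrix (Fin n) (Fin n) ℝ) :
    (Fin n → ℝ) →L[ℝ] (Fin n → ℝ) :=
  LinearMap.mkContinuous
    { toFun := fun v => A.mulVec v
      map_add' := fun u v => Matrix.mulVec_add A u v
      map_smul' := fun c v => Matrix.mulVec_smul A c v }
    ‖A‖ (fun v => Matrix.linfty_opNorm_mulVec A v)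

@[simp] lemma mulVecLCLM_apply (A : Matrix (Fin n) (Fin n) ℝ) (v : Fin n → ℝ) :
    mulVecLCLM A v = A.mulVec v := rfl

lemma measurableSet_U : MeasurableSet {p : ℝ × ℝ | 0 ≤ p.2 ∧ p.2 ≤ p.1 ∧ p.1 ≤ T} := by
  refine MeasurableSet.inter ?_ (MeasurableSet.inter ?_ ?_)
  · exact measurableSet_le measurable_const measurable_snd
  · exact measurableSet_le measurable_snd measurable_fst
  · exact measurableSet_le measurable_fst measurable_const

lemma resolvent_tri_sm (hK : StronglyMeasurable (fun p : ℝ × ℝ => K p.1 p.2))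
    (hb : ∀ s t : ℝ, 0 ≤ t → t ≤ s → s ≤ T → ‖K s t‖ ≤ M) :
    StronglyMeasurable ({p : ℝ × ℝ | 0 ≤ p.2 ∧ p.2 ≤ p.1 ∧ p.1 ≤ T}.indicator
      (fun p => resolventKernel K p.1 p.2)) := by
  set U := {p : ℝ × ℝ | 0 ≤ p.2 ∧ p.2 ≤ p.1 ∧ p.1 ≤ T} with hUdef
  have hU : MeasurableSet U := measurableSet_U
  set g : ℕ → (ℝ × ℝ) → Matrix (Fin n) (Fin n) ℝ := fun N =>
    U.indicator (fun p => ∑ m ∈ Finset.range N, iterKernel K m p.1 p.2) with hgdef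
  have hgsm : ∀ N, StronglyMeasurable (g N) := by
    intro N
    refine StronglyMeasurable.indicator ?_ hU
    exact Finset.stronglyMeasurable_fun_sum _ fun m _ => iter_sm hK m
  refine stronglyMeasurable_of_tendsto Filter.atTop hgsm ?_
  rw [tendsto_pi_nhds]
  intro p
  by_cases hp : p ∈ U
  · have hsum : Summable fun m : ℕ => iterKernel K m p.1 p.2 :=
      mat_summable hb hp.1 hp.2.1 hp.2.2
    have := hsum.hasSum.tendsto_sum_nat
    simp only [hgdef, Set.indicator_of_mem hp, resolventKernel]
    exact this
  · simp only [hgdef, Set.indicator_of_notMem hp]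
    exact tendsto_const_nhds

lemma solution_eq (hK : StronglyMeasurable (fun p : ℝ × ℝ => K p.1 p.2))
    (hb : ∀ s t : ℝ, 0 ≤ t → t ≤ s → s ≤ T → ‖K s t‖ ≤ M)
    (hT : 0 < T) (h : ℝ → Fin n → ℝ) (hh : ContinuousOn h (Set.Icc 0 T))
    {s : ℝ} (hs0 : 0 ≤ s) (hsT : s ≤ T) :
    (∫ t in (0:ℝ)..s, (resolventKernel K s t).mulVec (h t)) =
      ∫ t in (0:ℝ)..s, (K s t).mulVec
        (h t + ∫ r in (0:ℝ)..t, (resolventKernel K t r).mulVec (h r)) := by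
  classical
  have hM : 0 ≤ M := le_trans (norm_nonneg _) (hb 0 0 le_rfl le_rfl hT.le)
  set R : ℝ → ℝ → Matrix (Fin n) (Fin n) ℝ := resolventKernel K with hRdef
  set U := {p : ℝ × ℝ | 0 ≤ p.2 ∧ p.2 ≤ p.1 ∧ p.1 ≤ T} with hUdef
  have hU : MeasurableSet U := measurableSet_U
  set Rt : (ℝ × ℝ) → Matrix (Fin n) (Fin n) ℝ := U.indicator (fun p => R p.1 p.2) with hRt
  have hRtsm : StronglyMeasurable Rt := resolvent_tri_sm hK hb
  have hRteq : ∀ p ∈ U, Rt p = R p.1 p.2 := fun p hp => Set.indicator_of_mem hp _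
  -- bound for h
  obtain ⟨C, hC⟩ : ∃ C, ∀ t ∈ Set.Icc (0:ℝ) T, ‖h t‖ ≤ C :=
    isCompact_Icc.exists_bound_of_continuousOn hh
  have hC0 : 0 ≤ C := le_trans (norm_nonneg _) (hC 0 ⟨le_rfl, hT.le⟩)
  -- global bound for R on the triangle
  set CR : ℝ := M * Real.exp (M * T) with hCRdef
  have hCR0 : 0 ≤ CR := mul_nonneg hM (Real.exp_pos _).le
  have hRb : ∀ r u : ℝ, 0 ≤ u → u ≤ r → r ≤ T → ‖R r u‖ ≤ CR := by
    intro r u hu hur hrT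
    refine le_trans (resolvent_norm_le hb hu hur hrT) ?_
    rw [hCRdef]
    have : M * (r - u) ≤ M * T := mul_le_mul_of_nonneg_left (by linarith) hM
    exact mul_le_mul_of_nonneg_left (Real.exp_le_exp.2 this) hM
  -- measurable version of h
  set hi : ℝ → Fin n → ℝ := (Set.Icc (0:ℝ) T).indicator h with hhidef
  have hhism : StronglyMeasurable hi := by
    have hpw : (Set.Icc (0:ℝ) T).piecewise h 0 = hi := by
      funext x
      by_cases hx : x ∈ Set.Icc (0:ℝ) T
      · rw [Set.piecewise_eq_of_mem _ _ _ hx, hhidef, Set.indicator_of_mem hx]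
      · rw [Set.piecewise_eq_of_notMem _ _ _ hx, hhidef, Set.indicator_of_notMem hx]
        rfl
    have : Measurable ((Set.Icc (0:ℝ) T).piecewise h 0) :=
      ContinuousOn.measurable_piecewise hh continuous_const.continuousOn measurableSet_Icc
    rw [hpw] at this
    exact this.stronglyMeasurable
  have hhieq : ∀ t ∈ Set.Icc (0:ℝ) T, hi t = h t := fun t ht => Set.indicator_of_mem ht _
  -- integrability of t ↦ R r t *ᵥ h t  on Ioc 0 r
  have I_Rh : ∀ {r : ℝ}, 0 ≤ r → r ≤ T →
      MeasureTheory.IntegrableOn (fun t => (R r t).mulVec (h t)) (Set.Ioc 0 r)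
        MeasureTheory.volume := by
    intro r hr0 hrT
    have hsm : MeasureTheory.AEStronglyMeasurable (fun t => (R r t).mulVec (h t))
        (MeasureTheory.volume.restrict (Set.Ioc 0 r)) := by
      have h1 : StronglyMeasurable fun t => Rt (r, t) :=
        hRtsm.comp_measurable (measurable_const.prodMk measurable_id)
      have h2 : MeasureTheory.AEStronglyMeasurable
          (fun t => (Rt (r, t)).mulVec (hi t))
          (MeasureTheory.volume.restrict (Set.Ioc 0 r)) :=
        (continuous_mulVec.comp_aestronglyMeasurable
          (h1.aestronglyMeasurable.prodMk hhism.aestronglyMeasurable))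
      refine h2.congr ?_
      refine MeasureTheory.ae_restrict_of_forall_mem measurableSet_Ioc ?_
      intro t htm
      have hpU : (r, t) ∈ U := ⟨htm.1.le, htm.2, hrT⟩
      show Rt (r, t) *ᵥ hi t = R r t *ᵥ h t
      rw [hRteq _ hpU, hhieq t ⟨htm.1.le, le_trans htm.2 hrT⟩]
    refine MeasureTheory.Integrable.mono'
      (MeasureTheory.integrable_const (CR * C)) hsm ?_
    refine MeasureTheory.ae_restrict_of_forall_mem measurableSet_Ioc ?_
    intro t htm
    refine le_trans (Matrix.linfty_opNorm_mulVec _ _) ?_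
    exact mul_le_mul (hRb r t htm.1.le htm.2 hrT)
      (hC t ⟨htm.1.le, le_trans htm.2 hrT⟩) (norm_nonneg _) hCR0
  -- integrability of r ↦ K s r * R r t on Ioc t s
  have I_KR : ∀ {t : ℝ}, 0 < t → t ≤ s →
      MeasureTheory.IntegrableOn (fun r => K s r * R r t) (Set.Ioc t s)
        MeasureTheory.volume := by
    intro t ht0 hts
    have hsm : MeasureTheory.AEStronglyMeasurable (fun r => K s r * R r t)
        (MeasureTheory.volume.restrict (Set.Ioc t s)) := by
      have h1 : StronglyMeasurable fun r : ℝ => K s r :=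
        hK.comp_measurable (measurable_const.prodMk measurable_id)
      have h2 : StronglyMeasurable fun r : ℝ => Rt (r, t) :=
        hRtsm.comp_measurable (measurable_id.prodMk measurable_const)
      refine ((sm_mul h1 h2).aestronglyMeasurable).congr ?_
      refine MeasureTheory.ae_restrict_of_forall_mem measurableSet_Ioc ?_
      intro r hrm
      have hpU : (r, t) ∈ U := ⟨ht0.le, hrm.1.le, le_trans hrm.2 hsT⟩
      show K s r * Rt (r, t) = K s r * R r t
      rw [hRteq _ hpU]
    refine MeasureTheory.Integrable.mono'
      (MeasureTheory.integrable_const (M * CR)) hsm ?_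
    refine MeasureTheory.ae_restrict_of_forall_mem measurableSet_Ioc ?_
    intro r hrm
    refine le_trans (Matrix.linfty_opNorm_mul _ _) ?_
    exact mul_le_mul (hb s r (le_trans ht0.le hrm.1.le) hrm.2 hsT)
      (hRb r t ht0.le hrm.1.le (le_trans hrm.2 hsT)) (norm_nonneg _) hM
  -- pieces
  set f₁ : ℝ → Fin n → ℝ := fun t => (K s t).mulVec (h t) with hf₁def
  have hf₁ : MeasureTheory.IntegrableOn f₁ (Set.Ioc 0 s) MeasureTheory.volume := by
    have hsm : MeasureTheory.AEStronglyMeasurable f₁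
        (MeasureTheory.volume.restrict (Set.Ioc 0 s)) := by
      have h1 : StronglyMeasurable fun t : ℝ => K s t :=
        hK.comp_measurable (measurable_const.prodMk measurable_id)
      have h2 : MeasureTheory.AEStronglyMeasurable (fun t => (K s t).mulVec (hi t))
          (MeasureTheory.volume.restrict (Set.Ioc 0 s)) :=
        continuous_mulVec.comp_aestronglyMeasurable
          (h1.aestronglyMeasurable.prodMk hhism.aestronglyMeasurable)
      refine h2.congr ?_
      refine MeasureTheory.ae_restrict_of_forall_mem measurableSet_Ioc ?_
      intro t htm
      show K s t *ᵥ hi t = K s t *ᵥ h t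
      rw [hhieq t ⟨htm.1.le, le_trans htm.2 hsT⟩]
    refine MeasureTheory.Integrable.mono'
      (MeasureTheory.integrable_const (M * C)) hsm ?_
    refine MeasureTheory.ae_restrict_of_forall_mem measurableSet_Ioc ?_
    intro t htm
    refine le_trans (Matrix.linfty_opNorm_mulVec _ _) ?_
    exact mul_le_mul (hb s t htm.1.le htm.2 hsT)
      (hC t ⟨htm.1.le, le_trans htm.2 hsT⟩) (norm_nonneg _) hM
  set f₃ : ℝ → Fin n → ℝ :=
    fun t => (∫ r in Set.Ioc t s, K s r * R r t).mulVec (h t) with hf₃def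
  have hf₃eq : ∀ t ∈ Set.Ioc 0 s, f₃ t = (R s t).mulVec (h t) - f₁ t := by
    intro t htm
    have hre : R s t = K s t + ∫ r in Set.Ioc t s, K s r * R r t :=
      resolvent_eq hK hb htm.1.le htm.2 hsT
    rw [hf₃def, hf₁def]
    rw [hre, Matrix.add_mulVec]
    abel
  have hf₃ : MeasureTheory.IntegrableOn f₃ (Set.Ioc 0 s) MeasureTheory.volume := by
    refine MeasureTheory.Integrable.congr ((I_Rh hs0 hsT).sub hf₁) ?_
    refine MeasureTheory.ae_restrict_of_forall_mem measurableSet_Ioc ?_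
    intro t htm
    exact (hf₃eq t htm).symm
  -- the double-integral kernel
  set S : Set (ℝ × ℝ) := {p : ℝ × ℝ | 0 < p.1 ∧ p.1 < p.2 ∧ p.2 ≤ s} with hSdef
  have hS : MeasurableSet S := by
    refine MeasurableSet.inter ?_ (MeasurableSet.inter ?_ ?_)
    · exact measurableSet_lt measurable_const measurable_fst
    · exact measurableSet_lt measurable_fst measurable_snd
    · exact measurableSet_le measurable_snd measurable_const
  set F : ℝ × ℝ → Fin n → ℝ :=
    S.indicator (fun p => (K s p.2 * R p.2 p.1).mulVec (h p.1)) with hFdef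
  have hFsm : MeasureTheory.AEStronglyMeasurable F
      (MeasureTheory.volume.prod MeasureTheory.volume) := by
    have hFeq : F = S.indicator (fun p => (K s p.2 * Rt (p.2, p.1)).mulVec (hi p.1)) := by
      funext p
      by_cases hp : p ∈ S
      · have hpU : (p.2, p.1) ∈ U := ⟨hp.1.le, hp.2.1.le, le_trans hp.2.2 hsT⟩
        have hpI : p.1 ∈ Set.Icc (0:ℝ) T :=
          ⟨hp.1.le, le_trans (le_trans hp.2.1.le hp.2.2) hsT⟩
        rw [hFdef, Set.indicator_of_mem hp, Set.indicator_of_mem hp,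
          hRteq _ hpU, hhieq _ hpI]
      · rw [hFdef, Set.indicator_of_notMem hp, Set.indicator_of_notMem hp]
    rw [hFeq]
    refine StronglyMeasurable.aestronglyMeasurable ?_
    refine StronglyMeasurable.indicator ?_ hS
    have h1 : StronglyMeasurable fun p : ℝ × ℝ => K s p.2 :=
      hK.comp_measurable (measurable_const.prodMk measurable_snd)
    have h2 : StronglyMeasurable fun p : ℝ × ℝ => Rt (p.2, p.1) :=
      hRtsm.comp_measurable (measurable_snd.prodMk measurable_fst)
    have h3 : StronglyMeasurable fun p : ℝ × ℝ => hi p.1 :=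
      hhism.comp_measurable measurable_fst
    have h12 : StronglyMeasurable fun p : ℝ × ℝ => K s p.2 * Rt (p.2, p.1) := sm_mul h1 h2
    exact continuous_mulVec.comp_stronglyMeasurable (h12.prodMk h3)
  have hFbd : ∀ p : ℝ × ℝ, ‖F p‖ ≤
      (Set.Ioc 0 s ×ˢ Set.Ioc 0 s).indicator (fun _ => M * CR * C) p := by
    intro p
    by_cases hp : p ∈ S
    · have hmem : p ∈ Set.Ioc 0 s ×ˢ Set.Ioc 0 s :=
        ⟨⟨hp.1, le_trans hp.2.1.le hp.2.2⟩, ⟨lt_trans hp.1 hp.2.1, hp.2.2⟩⟩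
      rw [hFdef, Set.indicator_of_mem hp, Set.indicator_of_mem hmem]
      refine le_trans (Matrix.linfty_opNorm_mulVec _ _) ?_
      have hn1 : ‖K s p.2 * R p.2 p.1‖ ≤ M * CR := by
        refine le_trans (Matrix.linfty_opNorm_mul _ _) ?_
        exact mul_le_mul (hb s p.2 (le_trans hp.1.le hp.2.1.le) hp.2.2 hsT)
          (hRb p.2 p.1 hp.1.le hp.2.1.le (le_trans hp.2.2 hsT)) (norm_nonneg _) hM
      exact mul_le_mul hn1
        (hC p.1 ⟨hp.1.le, le_trans (le_trans hp.2.1.le hp.2.2) hsT⟩)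
        (norm_nonneg _) (mul_nonneg hM hCR0)
    · rw [hFdef, Set.indicator_of_notMem hp, norm_zero]
      exact Set.indicator_nonneg (fun _ _ => by positivity) p
  have hFint : MeasureTheory.Integrable F
      (MeasureTheory.volume.prod MeasureTheory.volume) := by
    refine MeasureTheory.Integrable.mono' ?_ hFsm
      (Filter.Eventually.of_forall hFbd)
    rw [MeasureTheory.integrable_indicator_iff (measurableSet_Ioc.prod measurableSet_Ioc)]
    refine MeasureTheory.integrableOn_const ?_
    rw [MeasureTheory.Measure.prod_prod, Real.volume_Ioc]
    exact (ENNReal.mul_lt_top ENNReal.ofReal_lt_top ENNReal.ofReal_lt_top).ne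
  -- x' r
  set x' : ℝ → Fin n → ℝ := fun r => ∫ t in Set.Ioc 0 r, (R r t).mulVec (h t) with hx'def
  -- B1 : f₃ as a full-line integral of F
  have B1 : ∀ t ∈ Set.Ioc 0 s, f₃ t = ∫ r, F (t, r) := by
    intro t htm
    have step1 : f₃ t = ∫ r in Set.Ioc t s, (K s r * R r t).mulVec (h t) :=
      (ContinuousLinearMap.integral_comp_comm (mulVecCLM (h t))
        (I_KR htm.1 htm.2)).symm
    have step2 : (fun r => (Set.Ioc t s).indicator
        (fun r => (K s r * R r t).mulVec (h t)) r) = fun r => F (t, r) := by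
      funext r
      by_cases hr : r ∈ Set.Ioc t s
      · have hrS : (t, r) ∈ S := ⟨htm.1, hr.1, hr.2⟩
        rw [Set.indicator_of_mem hr, hFdef, Set.indicator_of_mem hrS]
      · have hrS : (t, r) ∉ S := fun hc => hr ⟨hc.2.1, hc.2.2⟩
        rw [Set.indicator_of_notMem hr, hFdef, Set.indicator_of_notMem hrS]
    rw [step1, ← MeasureTheory.integral_indicator measurableSet_Ioc, step2]
  -- swap
  have hswap : (∫ t in Set.Ioc 0 s, f₃ t)
      = ∫ r in Set.Ioc 0 s, (K s r).mulVec (x' r) := by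
    have e1 : (∫ t in Set.Ioc 0 s, f₃ t) = ∫ t in Set.Ioc 0 s, ∫ r, F (t, r) :=
      MeasureTheory.setIntegral_congr_fun measurableSet_Ioc B1
    have e2 : (∫ t in Set.Ioc 0 s, ∫ r, F (t, r)) = ∫ t, ∫ r, F (t, r) := by
      refine MeasureTheory.setIntegral_eq_integral_of_forall_compl_eq_zero ?_
      intro t ht
      have : ∀ r, F (t, r) = 0 := by
        intro r
        refine Set.indicator_of_notMem ?_ _
        intro hc
        exact ht ⟨hc.1, le_trans hc.2.1.le hc.2.2⟩
      simp [this]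
    have e3 : (∫ t, ∫ r, F (t, r)) = ∫ r, ∫ t, F (t, r) :=
      MeasureTheory.integral_integral_swap hFint
    have e4 : (∫ r, ∫ t, F (t, r)) = ∫ r in Set.Ioc 0 s, ∫ t, F (t, r) := by
      refine (MeasureTheory.setIntegral_eq_integral_of_forall_compl_eq_zero ?_).symm
      intro r hr
      have : ∀ t, F (t, r) = 0 := by
        intro t
        refine Set.indicator_of_notMem ?_ _
        intro hc
        exact hr ⟨lt_trans hc.1 hc.2.1, hc.2.2⟩
      simp [this]
    have e5 : ∀ r ∈ Set.Ioc 0 s, (∫ t, F (t, r)) = (K s r).mulVec (x' r) := by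
      intro r hrm
      have hstep : (fun t => F (t, r)) = fun t =>
          (Set.Ioo 0 r).indicator (fun t => (K s r * R r t).mulVec (h t)) t := by
        funext t
        by_cases htr : t ∈ Set.Ioo 0 r
        · have hS' : (t, r) ∈ S := ⟨htr.1, htr.2, hrm.2⟩
          rw [hFdef, Set.indicator_of_mem hS', Set.indicator_of_mem htr]
        · have hS' : (t, r) ∉ S := fun hc => htr ⟨hc.1, hc.2.1⟩
          rw [hFdef, Set.indicator_of_notMem hS', Set.indicator_of_notMem htr]
      rw [hstep, MeasureTheory.integral_indicator measurableSet_Ioo,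
        ← MeasureTheory.integral_Ioc_eq_integral_Ioo]
      have hcong : (fun t => (K s r * R r t).mulVec (h t))
          = fun t => mulVecLCLM (K s r) ((R r t).mulVec (h t)) := by
        funext t
        rw [mulVecLCLM_apply, Matrix.mulVec_mulVec]
      rw [MeasureTheory.setIntegral_congr_fun measurableSet_Ioc
        (fun t _ => congrFun hcong t)]
      exact ContinuousLinearMap.integral_comp_comm (mulVecLCLM (K s r))
        (I_Rh hrm.1.le (le_trans hrm.2 hsT))
    calc (∫ t in Set.Ioc 0 s, f₃ t) = ∫ t in Set.Ioc 0 s, ∫ r, F (t, r) := e1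
      _ = ∫ t, ∫ r, F (t, r) := e2
      _ = ∫ r, ∫ t, F (t, r) := e3
      _ = ∫ r in Set.Ioc 0 s, ∫ t, F (t, r) := e4
      _ = ∫ r in Set.Ioc 0 s, (K s r).mulVec (x' r) :=
        MeasureTheory.setIntegral_congr_fun measurableSet_Ioc e5
  -- integrability of r ↦ K s r *ᵥ x' r on Ioc 0 s
  have hKx' : MeasureTheory.IntegrableOn (fun r => (K s r).mulVec (x' r))
      (Set.Ioc 0 s) MeasureTheory.volume := by
    have hf₂ : MeasureTheory.Integrable (fun r => ∫ t, F (t, r)) MeasureTheory.volume :=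
      hFint.integral_prod_right
    have e5 : ∀ r ∈ Set.Ioc 0 s, (∫ t, F (t, r)) = (K s r).mulVec (x' r) := by
      intro r hrm
      have hstep : (fun t => F (t, r)) = fun t =>
          (Set.Ioo 0 r).indicator (fun t => (K s r * R r t).mulVec (h t)) t := by
        funext t
        by_cases htr : t ∈ Set.Ioo 0 r
        · have hS' : (t, r) ∈ S := ⟨htr.1, htr.2, hrm.2⟩
          rw [hFdef, Set.indicator_of_mem hS', Set.indicator_of_mem htr]
        · have hS' : (t, r) ∉ S := fun hc => htr ⟨hc.1, hc.2.1⟩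
          rw [hFdef, Set.indicator_of_notMem hS', Set.indicator_of_notMem htr]
      rw [hstep, MeasureTheory.integral_indicator measurableSet_Ioo,
        ← MeasureTheory.integral_Ioc_eq_integral_Ioo]
      have hcong : (fun t => (K s r * R r t).mulVec (h t))
          = fun t => mulVecLCLM (K s r) ((R r t).mulVec (h t)) := by
        funext t
        rw [mulVecLCLM_apply, Matrix.mulVec_mulVec]
      rw [MeasureTheory.setIntegral_congr_fun measurableSet_Ioc
        (fun t _ => congrFun hcong t)]
      exact ContinuousLinearMap.integral_comp_comm (mulVecLCLM (K s r))
        (I_Rh hrm.1.le (le_trans hrm.2 hsT))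
    refine MeasureTheory.Integrable.congr hf₂.integrableOn ?_
    refine MeasureTheory.ae_restrict_of_forall_mem measurableSet_Ioc ?_
    intro r hrm
    exact e5 r hrm
  -- final assembly
  rw [intervalIntegral.integral_of_le hs0, intervalIntegral.integral_of_le hs0]
  have lhs_split : (∫ t in Set.Ioc 0 s, (R s t).mulVec (h t))
      = (∫ t in Set.Ioc 0 s, f₁ t) + ∫ t in Set.Ioc 0 s, f₃ t := by
    rw [← MeasureTheory.integral_add hf₁ hf₃]
    refine MeasureTheory.setIntegral_congr_fun measurableSet_Ioc ?_
    intro t htm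
    show R s t *ᵥ h t = f₁ t + f₃ t
    rw [hf₃eq t htm]
    abel
  have rhs_split : (∫ t in Set.Ioc 0 s, (K s t).mulVec
        (h t + ∫ r in (0:ℝ)..t, (R t r).mulVec (h r)))
      = (∫ t in Set.Ioc 0 s, f₁ t) + ∫ t in Set.Ioc 0 s, (K s t).mulVec (x' t) := by
    rw [← MeasureTheory.integral_add hf₁ hKx']
    refine MeasureTheory.setIntegral_congr_fun measurableSet_Ioc ?_
    intro t htm
    show K s t *ᵥ (h t + ∫ r in (0:ℝ)..t, R t r *ᵥ h r) = f₁ t + K s t *ᵥ x' t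
    rw [intervalIntegral.integral_of_le htm.1.le, Matrix.mulVec_add]
  rw [lhs_split, rhs_split, hswap]

end VoltAux
end

/-- **Theorem 4.3, solution representation (equations (4.16)–(4.17)).** For a measurable kernel
with `‖K(s,t)‖ ≤ M` on the triangle, the resolvent series `R(s,t) = ∑_{m≥1} K^{*m}(s,t)`
converges absolutely with `‖R(s,t)‖ ≤ M e^{M(s−t)}`, and for every continuous `h` the function
`x(s) = h(s) + ∫₀ˢ R(s,t)·h(t) dt` solves the linear Volterra equation
`x(s) = h(s) + ∫₀ˢ K(s,t)·x(t) dt`. -/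
theorem resolvent_solves_linear_volterra
    (n : ℕ) (T : ℝ) (hT : 0 < T)
    (K : ℝ → ℝ → Matrix (Fin n) (Fin n) ℝ)
    (hmeas : ∀ i j : Fin n, Measurable (fun p : ℝ × ℝ => K p.1 p.2 i j))
    (M : ℝ) (hbound : ∀ s t : ℝ, 0 ≤ t → t ≤ s → s ≤ T → ‖K s t‖ ≤ M) :
    (∀ s t : ℝ, 0 ≤ t → t ≤ s → s ≤ T →
      Summable (fun m : ℕ => ‖iterKernel K m s t‖) ∧
      ‖resolventKernel K s t‖ ≤ M * Real.exp (M * (s - t))) ∧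
    (∀ h : ℝ → (Fin n → ℝ), ContinuousOn h (Icc 0 T) →
      ∀ s ∈ Icc 0 T,
        (h s + ∫ t in (0:ℝ)..s, (resolventKernel K s t).mulVec (h t)) =
          h s + ∫ t in (0:ℝ)..s, (K s t).mulVec
            (h t + ∫ r in (0:ℝ)..t, (resolventKernel K t r).mulVec (h r))) := by
  have hKsm : StronglyMeasurable (fun p : ℝ × ℝ => K p.1 p.2) :=
    VoltAux.sm_of_entries (fun i j => hmeas i j)
  constructor
  · intro s t ht hts hsT
    exact ⟨VoltAux.norm_summable hbound ht hts hsT,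
      VoltAux.resolvent_norm_le hbound ht hts hsT⟩
  · intro h hh s hs
    rw [VoltAux.solution_eq hKsm hbound hT h hh hs.1 hs.2]
end
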